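/- arXiv:1605.07730 — 8 statements merged into one kernel-verified Lean document; each statement's English description precedes it below -/
import Mathlib

section
/- Let G be a K×K lower triangular real matrix with rows g_1,…,g_K and diagonal entries g_{i,i}. Let W be an m-dimensional subspace of ℝ^K with 1 ≤ m < K, and let P be the orthogonal projection of ℝ^K onto W. Then ∏_{i=1}^K g_{i,i}^2 ≤ ( (1/m) ∑_{i=1}^K ‖P g_i‖² )^m · ( (1/(K−m)) ∑_{i=1}^K ‖g_i − P g_i‖² )^{K−m}, where ‖·‖ denotes the Euclidean norm on ℝ^K. -/
open Module Finset

-- Hadamard's inequality via Gram-Schmidt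
lemma hadamard_det {K : ℕ} (f : Fin K → EuclideanSpace ℝ (Fin K)) :
    |(EuclideanSpace.basisFun (Fin K) ℝ).toBasis.det f| ≤ ∏ i, ‖f i‖ := by
  have h : finrank ℝ (EuclideanSpace ℝ (Fin K)) = Fintype.card (Fin K) := by simp
  set e := EuclideanSpace.basisFun (Fin K) ℝ with he
  haveI i1 : WellFoundedLT (Fin K) := inferInstance
  set c := InnerProductSpace.gramSchmidtOrthonormalBasis (𝕜 := ℝ) h f with hc
  have h1 : e.toBasis.det f = e.toBasis.det c.toBasis * c.toBasis.det f := by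
    conv_lhs => rw [e.toBasis.det.eq_smul_basis_det c.toBasis]
    simp
  have h2 : |e.toBasis.det c.toBasis| = 1 := by
    rw [show (c.toBasis : Fin K → EuclideanSpace ℝ (Fin K)) = ⇑c from c.coe_toBasis]
    rcases e.det_to_matrix_orthonormalBasis_real c with h' | h' <;> rw [h'] <;> norm_num
  rw [h1, abs_mul, h2, one_mul, InnerProductSpace.gramSchmidtOrthonormalBasis_det h f, Finset.abs_prod]
  refine Finset.prod_le_prod (fun i _ => abs_nonneg _) (fun i _ => ?_)
  calc |(inner ℝ (c i) (f i) : ℝ)| ≤ ‖c i‖ * ‖f i‖ := abs_real_inner_le_norm _ _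
    _ = ‖f i‖ := by rw [c.orthonormal.1 i, one_mul]

-- AM-GM consequence
lemma prod_le_one_of_sum_eq {K : ℕ} (hK : 0 < K) (z : Fin K → ℝ) (hz : ∀ i, 0 ≤ z i)
    (hsum : ∑ i, z i = K) : ∏ i, z i ≤ 1 := by
  have hK' : (0:ℝ) < K := by exact_mod_cast hK
  have h := Real.geom_mean_le_arith_mean_weighted Finset.univ (fun _ => (K:ℝ)⁻¹) z
    (fun i _ => by positivity) (by simp; field_simp) (fun i _ => hz i)
  have h2 : ∑ i, (K:ℝ)⁻¹ * z i = 1 := by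
    rw [← Finset.mul_sum, hsum, inv_mul_cancel₀ hK'.ne']
  rw [h2] at h
  have h3 : (∏ i, z i ^ ((K:ℝ)⁻¹)) ^ (K:ℕ) ≤ 1 := by
    exact pow_le_one₀ (Finset.prod_nonneg fun i _ => Real.rpow_nonneg (hz i) _) h
  calc ∏ i, z i = (∏ i, z i ^ ((K:ℝ)⁻¹)) ^ (K:ℕ) := by
        rw [← Finset.prod_pow]
        refine Finset.prod_congr rfl fun i _ => ?_
        rw [← Real.rpow_natCast (z i ^ ((K:ℝ)⁻¹)) K, ← Real.rpow_mul (hz i),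
          inv_mul_cancel₀ hK'.ne', Real.rpow_one]
    _ ≤ 1 := h3

-- determinant of scaling map adapted to W, Wᗮ
lemma det_scaling {E : Type*} [NormedAddCommGroup E] [InnerProductSpace ℝ E]
    [FiniteDimensional ℝ E] (W : Submodule ℝ E) (T : E →ₗ[ℝ] E) (a b : ℝ)
    (hTW : ∀ x ∈ W, T x = a • x) (hTO : ∀ x ∈ Wᗮ, T x = b • x) :
    LinearMap.det T = a ^ (finrank ℝ W) * b ^ (finrank ℝ Wᗮ) := by
  classical
  set bW := finBasis ℝ W
  set bO := finBasis ℝ Wᗮ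
  have hcompl : IsCompl W Wᗮ := Submodule.isCompl_orthogonal_of_hasOrthogonalProjection
  set B := (bW.prod bO).map (W.prodEquivOfIsCompl Wᗮ hcompl)
  set d : Fin (finrank ℝ W) ⊕ Fin (finrank ℝ Wᗮ) → ℝ := Sum.elim (fun _ => a) (fun _ => b)
  have hB1 : ∀ i, B (Sum.inl i) = (bW i : E) := by
    intro i
    simp [B, Basis.prod_apply, Submodule.coe_prodEquivOfIsCompl]
  have hB2 : ∀ i, B (Sum.inr i) = (bO i : E) := by
    intro i
    simp [B, Basis.prod_apply, Submodule.coe_prodEquivOfIsCompl]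
  have hTB : ∀ i, T (B i) = d i • B i := by
    rintro (i | i)
    · rw [hB1]; exact hTW _ (bW i).2
    · rw [hB2]; exact hTO _ (bO i).2
  have hmat : LinearMap.toMatrix B B T = Matrix.diagonal d := by
    ext i j
    rw [LinearMap.toMatrix_apply, hTB j, map_smul, Basis.repr_self,
      Finsupp.smul_single, smul_eq_mul, mul_one, Finsupp.single_apply, Matrix.diagonal_apply]
    by_cases hij : i = j
    · simp [hij]
    · simp [hij, Ne.symm hij]
  rw [← LinearMap.det_toMatrix B, hmat, Matrix.det_diagonal, Fintype.prod_sum_type]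
  simp [d]

set_option maxHeartbeats 1000000 in
theorem stmt_0 (K m : ℕ) (hm : 1 ≤ m) (hmK : m < K)
    (G : Matrix (Fin K) (Fin K) ℝ)
    (hlower : ∀ i j : Fin K, i < j → G i j = 0)
    (g : Fin K → EuclideanSpace ℝ (Fin K))
    (hg : ∀ i j : Fin K, g i j = G i j)
    (W : Submodule ℝ (EuclideanSpace ℝ (Fin K)))
    (hW : Module.finrank ℝ W = m) :
    ∏ i : Fin K, (G i i) ^ 2 ≤
      ((1 / (m : ℝ)) * ∑ i : Fin K,
          ‖(Submodule.orthogonalProjectionOnto W (g i) : EuclideanSpace ℝ (Fin K))‖ ^ 2) ^ m *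
      ((1 / ((K : ℝ) - (m : ℝ))) * ∑ i : Fin K,
          ‖g i - (Submodule.orthogonalProjectionOnto W (g i) : EuclideanSpace ℝ (Fin K))‖ ^ 2) ^ (K - m) := by
  have hE : finrank ℝ (EuclideanSpace ℝ (Fin K)) = K := finrank_euclideanSpace_fin
  have hWO : finrank ℝ (Wᗮ) = K - m := by
    have h1 := Submodule.finrank_add_finrank_orthogonal (K := W)
    rw [hW, hE] at h1; omega
  set e := EuclideanSpace.basisFun (Fin K) ℝ with he
  set pr : Fin K → EuclideanSpace ℝ (Fin K) :=
    fun i => (Submodule.orthogonalProjectionOnto W (g i) : EuclideanSpace ℝ (Fin K)) with hpr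
  set X := ∑ i : Fin K, ‖pr i‖ ^ 2 with hXdef
  set Y := ∑ i : Fin K, ‖g i - pr i‖ ^ 2 with hYdef
  -- determinant of g
  have hdetg : e.toBasis.det g = ∏ i, G i i := by
    rw [Basis.det_apply]
    have h2 : e.toBasis.toMatrix g = G.transpose := by
      ext i j
      rw [Basis.toMatrix_apply, OrthonormalBasis.coe_toBasis_repr_apply,
        EuclideanSpace.basisFun_repr, hg, Matrix.transpose_apply]
    rw [h2, Matrix.det_transpose]
    exact Matrix.det_of_lowerTriangular G (fun i j hij => hlower _ _ hij)
  have hLHS : ∏ i : Fin K, (G i i) ^ 2 = (e.toBasis.det g) ^ 2 := by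
    rw [hdetg, Finset.prod_pow]
  -- degenerate-case helper
  have hdet0 : ∀ (V : Submodule ℝ (EuclideanSpace ℝ (Fin K))), finrank ℝ V < K →
      (∀ i, g i ∈ V) → e.toBasis.det g = 0 := by
    intro V hV hmem
    by_contra hne
    obtain ⟨hli, -⟩ := (Module.Basis.is_basis_iff_det e.toBasis).mpr (isUnit_iff_ne_zero.mpr hne)
    have hli' : LinearIndependent ℝ (fun i => (⟨g i, hmem i⟩ : V)) :=
      LinearIndependent.of_comp V.subtype hli
    have hcard := hli'.fintype_card_le_finrank
    simp only [Fintype.card_fin] at hcard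
    omega
  have hX0 : (0:ℝ) ≤ X := by positivity
  have hY0 : (0:ℝ) ≤ Y := by positivity
  have hm0 : (0:ℝ) < m := by exact_mod_cast hm
  have hKm0 : (0:ℝ) < (K:ℝ) - m := by
    have : (m:ℝ) < K := by exact_mod_cast hmK
    linarith
  rcases hX0.eq_or_lt with hX | hX
  · -- X = 0 : all g i ∈ Wᗮ
    have hz : ∀ i ∈ Finset.univ, ‖pr i‖ ^ 2 = 0 := by
      intro i _
      refine (Finset.sum_eq_zero_iff_of_nonneg (fun i _ => by positivity)).mp hX.symm i (by simp)
    have hmem : ∀ i, g i ∈ Wᗮ := by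
      intro i
      have h1 : pr i = 0 := by
        have := hz i (Finset.mem_univ i); simpa [pow_eq_zero_iff] using this
      have h2 : g i - pr i ∈ Wᗮ := Submodule.sub_starProjection_mem_orthogonal (K := W) (g i)
      rwa [h1, sub_zero] at h2
    have hdz : e.toBasis.det g = 0 := hdet0 Wᗮ (by omega) hmem
    rw [hLHS, hdz, zero_pow (by norm_num : (2:ℕ) ≠ 0)]
    have hR1 : (0:ℝ) ≤ 1/(m:ℝ) * X := mul_nonneg (by positivity) hX0
    have hR2 : (0:ℝ) ≤ 1/((K:ℝ)-m) * Y := mul_nonneg (one_div_nonneg.mpr hKm0.le) hY0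
    exact mul_nonneg (pow_nonneg hR1 m) (pow_nonneg hR2 (K-m))
  rcases hY0.eq_or_lt with hY | hY
  · -- Y = 0 : all g i ∈ W
    have hmem : ∀ i, g i ∈ W := by
      intro i
      have h1 : g i - pr i = 0 := by
        have := (Finset.sum_eq_zero_iff_of_nonneg (fun i _ => by positivity)).mp hY.symm i (by simp)
        simpa [pow_eq_zero_iff] using this
      have h2 : g i = pr i := by rwa [sub_eq_zero] at h1
      rw [h2, hpr]
      exact SetLike.coe_mem _
    have hdz : e.toBasis.det g = 0 := hdet0 W (by omega) hmem
    rw [hLHS, hdz, zero_pow (by norm_num : (2:ℕ) ≠ 0)]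
    have hR1 : (0:ℝ) ≤ 1/(m:ℝ) * X := mul_nonneg (by positivity) hX0
    have hR2 : (0:ℝ) ≤ 1/((K:ℝ)-m) * Y := mul_nonneg (one_div_nonneg.mpr hKm0.le) hY0
    exact mul_nonneg (pow_nonneg hR1 m) (pow_nonneg hR2 (K-m))
  · -- main case: X > 0, Y > 0
    set α := Real.sqrt ((m:ℝ)/X) with hα
    set β := Real.sqrt (((K:ℝ)-m)/Y) with hβ
    have hα2 : α^2 = (m:ℝ)/X := Real.sq_sqrt (by positivity)
    have hβ2 : β^2 = ((K:ℝ)-m)/Y := Real.sq_sqrt (div_nonneg hKm0.le hY0)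
    set Pl : EuclideanSpace ℝ (Fin K) →ₗ[ℝ] EuclideanSpace ℝ (Fin K) :=
      W.subtype ∘ₗ (Submodule.orthogonalProjectionOnto W).toLinearMap with hPldef
    set T : EuclideanSpace ℝ (Fin K) →ₗ[ℝ] EuclideanSpace ℝ (Fin K) :=
      β • LinearMap.id + (α - β) • Pl with hT
    have hTx : ∀ x, T x = α • (Submodule.orthogonalProjectionOnto W x : EuclideanSpace ℝ (Fin K))
        + β • (x - (Submodule.orthogonalProjectionOnto W x : EuclideanSpace ℝ (Fin K))) := by
      intro x
      simp only [hT, hPldef, LinearMap.add_apply, LinearMap.smul_apply, LinearMap.id_apply,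
        LinearMap.coe_comp, Function.comp_apply, Submodule.coe_subtype,
        ContinuousLinearMap.coe_coe]
      module
    have hTW : ∀ x ∈ W, T x = α • x := by
      intro x hx
      rw [hTx, show ((Submodule.orthogonalProjectionOnto W x : _) : EuclideanSpace ℝ (Fin K)) = x from
        (Submodule.starProjection_eq_self_iff (K := W)).mpr hx]
      simp
    have hTO : ∀ x ∈ Wᗮ, T x = β • x := by
      intro x hx
      rw [hTx, Submodule.orthogonalProjectionOnto_apply_of_mem_orthogonal hx]
      simp
    have hdetT : LinearMap.det T = α^m * β^(K-m) := by
      rw [det_scaling W T α β hTW hTO, hW, hWO]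
    have hnorm : ∀ x, ‖T x‖^2
        = α^2 * ‖(Submodule.orthogonalProjectionOnto W x : EuclideanSpace ℝ (Fin K))‖^2
        + β^2 * ‖x - (Submodule.orthogonalProjectionOnto W x : EuclideanSpace ℝ (Fin K))‖^2 := by
      intro x
      rw [hTx, norm_add_sq_real]
      have hin : (inner ℝ (α • (Submodule.orthogonalProjectionOnto W x : EuclideanSpace ℝ (Fin K)))
          (β • (x - (Submodule.orthogonalProjectionOnto W x : EuclideanSpace ℝ (Fin K)))) : ℝ) = 0 := by
        rw [real_inner_smul_left, real_inner_smul_right]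
        have h1 : x - (Submodule.orthogonalProjectionOnto W x : EuclideanSpace ℝ (Fin K)) ∈ Wᗮ :=
          Submodule.sub_starProjection_mem_orthogonal (K := W) x
        rw [Submodule.mem_orthogonal] at h1
        rw [h1 _ (SetLike.coe_mem _), mul_zero, mul_zero]
      rw [hin, norm_smul, norm_smul]
      simp only [Real.norm_eq_abs, mul_pow, sq_abs]
      ring
    have hsum : ∑ i, ‖T (g i)‖^2 = (K:ℝ) := by
      calc ∑ i, ‖T (g i)‖^2 = α^2 * X + β^2 * Y := by
            simp_rw [hnorm]
            rw [Finset.sum_add_distrib, ← Finset.mul_sum, ← Finset.mul_sum]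
        _ = (K:ℝ) := by
            rw [hα2, hβ2, div_mul_cancel₀ _ hX.ne', div_mul_cancel₀ _ hY.ne']
            ring
    have hadam := hadamard_det (fun i => T (g i))
    have hcomp : e.toBasis.det (fun i => T (g i)) = LinearMap.det T * e.toBasis.det g :=
      Basis.det_comp e.toBasis T g
    have h1 : (LinearMap.det T * e.toBasis.det g)^2 ≤ ∏ i, ‖T (g i)‖^2 := by
      rw [Finset.prod_pow, ← hcomp, ← sq_abs (e.toBasis.det (fun i => T (g i)))]
      exact pow_le_pow_left₀ (abs_nonneg _) hadam 2
    have h2 : ∏ i, ‖T (g i)‖^2 ≤ 1 :=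
      prod_le_one_of_sum_eq (by omega) _ (fun i => by positivity) hsum
    have h3 : (e.toBasis.det g)^2 * (α^m * β^(K-m))^2 ≤ 1 := by
      calc (e.toBasis.det g)^2 * (α^m * β^(K-m))^2
          = (LinearMap.det T * e.toBasis.det g)^2 := by rw [hdetT]; ring
        _ ≤ 1 := le_trans h1 h2
    have hc : (α^m * β^(K-m))^2 = ((m:ℝ)/X)^m * (((K:ℝ)-m)/Y)^(K-m) := by
      rw [mul_pow, ← pow_mul, ← pow_mul, mul_comm m 2, mul_comm (K-m) 2, pow_mul, pow_mul,
        hα2, hβ2]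
    have hcpos : (0:ℝ) < ((m:ℝ)/X)^m * (((K:ℝ)-m)/Y)^(K-m) :=
      mul_pos (pow_pos (div_pos hm0 hX) m) (pow_pos (div_pos hKm0 hY) (K-m))
    have h4 : (e.toBasis.det g)^2 ≤ 1 / (((m:ℝ)/X)^m * (((K:ℝ)-m)/Y)^(K-m)) := by
      rw [le_div_iff₀ hcpos, ← hc]
      exact h3
    rw [hLHS]
    refine le_trans h4 (le_of_eq ?_)
    rw [one_div, mul_inv, ← inv_pow, ← inv_pow, inv_div, inv_div]
    congr 1
    · congr 1
      rw [one_div, inv_mul_eq_div]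
    · congr 1
      rw [one_div, inv_mul_eq_div]
end

section
/- Let (τ_n)_{n≥1} be a nonincreasing sequence of reals in [0,1], (d_n)_{n≥1} nonnegative reals, and (γ_n)_{n≥1} ⊆ (0,1], satisfying for all N ≥ 0, K ≥ 2, 1 ≤ m < K the inequality ∏_{i=1}^K τ_{N+i}² ≤ (∏_{i=1}^K γ_{N+i})^{-2} · 2^K K^{K−m} (∑_{i=1}^K τ_{N+i}²)^m d_m^{2(K−m)}. Then for every ℓ ≥ 1: τ_{2ℓ} ≤ 2 (∏_{i=1}^{2ℓ} γ_i^{1/(2ℓ)})^{-1} √(ℓ d_ℓ). -/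
theorem stmt_5 (τ d γ : ℕ → ℝ)
    (hτ0 : ∀ n, 0 ≤ τ n) (hτ1 : ∀ n, τ n ≤ 1)
    (hmono : ∀ m n : ℕ, m ≤ n → τ n ≤ τ m)
    (hd : ∀ n, 0 ≤ d n)
    (hγ : ∀ n, 0 < γ n ∧ γ n ≤ 1)
    (hmaster : ∀ N K m : ℕ, 2 ≤ K → 1 ≤ m → m < K →
      ∏ i ∈ Finset.Icc 1 K, (τ (N + i)) ^ 2 ≤
        ((∏ i ∈ Finset.Icc 1 K, γ (N + i))⁻¹) ^ 2 * 2 ^ K * (K : ℝ) ^ (K - m) *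
          (∑ i ∈ Finset.Icc 1 K, (τ (N + i)) ^ 2) ^ m * (d m) ^ (2 * (K - m))) :
    ∀ ℓ : ℕ, 1 ≤ ℓ →
      τ (2 * ℓ) ≤ 2 * (∏ i ∈ Finset.Icc 1 (2 * ℓ), (γ i) ^ ((1 : ℝ) / (2 * ℓ)))⁻¹ *
        Real.sqrt ((ℓ : ℝ) * d ℓ) := by
  intro ℓ hℓ
  have hℓR : (0:ℝ) < (ℓ:ℝ) := by exact_mod_cast hℓ
  set s := Finset.Icc 1 (2*ℓ) with hs
  have hcard : s.card = 2*ℓ := by simp [hs]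
  have hP : 0 < ∏ i ∈ s, γ i := Finset.prod_pos (fun i _ => (hγ i).1)
  set P := ∏ i ∈ s, γ i with hPdef
  have hmast := hmaster 0 (2*ℓ) ℓ (by omega) hℓ (by omega)
  simp only [Nat.zero_add, ← hs, ← hPdef] at hmast
  have hlow : (τ (2*ℓ))^(4*ℓ) ≤ ∏ i ∈ s, (τ i)^2 := by
    have he : (τ (2*ℓ))^(4*ℓ) = ∏ _i ∈ s, (τ (2*ℓ))^2 := by
      rw [Finset.prod_const, hcard, ← pow_mul]
      ring_nf
    rw [he]
    refine Finset.prod_le_prod (fun i _ => by positivity) ?_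
    intro i hi
    exact pow_le_pow_left₀ (hτ0 _) (hmono i (2*ℓ) (Finset.mem_Icc.mp hi).2) 2
  have hsum : ∑ i ∈ s, (τ i)^2 ≤ ((2*ℓ : ℕ) : ℝ) := by
    calc ∑ i ∈ s, (τ i)^2 ≤ ∑ _i ∈ s, (1:ℝ) :=
          Finset.sum_le_sum (fun i _ => by nlinarith [hτ0 i, hτ1 i])
      _ = ((2*ℓ:ℕ):ℝ) := by simp [hcard]
  have hsub : 2*ℓ - ℓ = ℓ := by omega
  have hsum0 : 0 ≤ ∑ i ∈ s, (τ i)^2 := Finset.sum_nonneg (fun i _ => by positivity)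
  have hup : ∏ i ∈ s, (τ i)^2 ≤ (P⁻¹)^2 * (4*ℓ*d ℓ)^(2*ℓ) := by
    calc ∏ i ∈ s, (τ i)^2
        ≤ (P⁻¹)^2 * 2^(2*ℓ) * ((2*ℓ:ℕ):ℝ)^(2*ℓ - ℓ) * (∑ i ∈ s, (τ i)^2)^ℓ *
            (d ℓ)^(2*(2*ℓ-ℓ)) := by exact_mod_cast hmast
      _ ≤ (P⁻¹)^2 * 2^(2*ℓ) * ((2*ℓ:ℕ):ℝ)^ℓ * ((2*ℓ:ℕ):ℝ)^ℓ * (d ℓ)^(2*ℓ) := by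
          rw [hsub]
          have h1 : (∑ i ∈ s, (τ i)^2)^ℓ ≤ ((2*ℓ:ℕ):ℝ)^ℓ :=
            pow_le_pow_left₀ hsum0 hsum ℓ
          have hPinv : (0:ℝ) ≤ (P⁻¹)^2 := by positivity
          have h2ℓ : (0:ℝ) ≤ ((2*ℓ:ℕ):ℝ)^ℓ := by positivity
          gcongr <;> exact pow_nonneg (hd ℓ) _
      _ = (P⁻¹)^2 * (4*ℓ*d ℓ)^(2*ℓ) := by
          push_cast
          rw [mul_assoc ((P⁻¹)^2 * 2^(2*ℓ)), ← pow_add]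
          have : ℓ + ℓ = 2*ℓ := by omega
          rw [this, mul_assoc, mul_assoc, ← mul_pow, ← mul_pow]
          ring_nf
  set Q := ∏ i ∈ s, (γ i) ^ ((1:ℝ)/(2*ℓ)) with hQdef
  have hQP : Q = P ^ ((1:ℝ)/(2*ℓ)) := by
    rw [hQdef, hPdef, ← Real.finset_prod_rpow s γ (fun i _ => (hγ i).1.le)]
  have hQpos : 0 < Q := by
    rw [hQP]; exact Real.rpow_pos_of_pos hP _
  have hrhs : (2 * Q⁻¹ * Real.sqrt (ℓ * d ℓ))^(4*ℓ) = (P⁻¹)^2 * (4*ℓ*d ℓ)^(2*ℓ) := by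
    have hQpow : Q^(4*ℓ) = P^2 := by
      rw [hQP, ← Real.rpow_natCast (P ^ ((1:ℝ)/(2*ℓ))) (4*ℓ), ← Real.rpow_mul hP.le]
      have : (1:ℝ)/(2*ℓ) * ((4*ℓ:ℕ):ℝ) = 2 := by
        push_cast; field_simp; ring
      rw [this]
      exact Real.rpow_two P
    have hsq : (Real.sqrt (ℓ * d ℓ))^(4*ℓ) = (ℓ * d ℓ)^(2*ℓ) := by
      have h4 : 4*ℓ = 2*(2*ℓ) := by omega
      rw [h4, pow_mul, Real.sq_sqrt (mul_nonneg hℓR.le (hd ℓ))]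
    rw [mul_pow, mul_pow, hsq, inv_pow, hQpow, ← inv_pow]
    have h2 : (2:ℝ)^(4*ℓ) = 4^(2*ℓ) := by
      rw [show 4*ℓ = 2*(2*ℓ) by omega, pow_mul]; norm_num
    rw [h2, mul_assoc, mul_comm (4^(2*ℓ)), mul_assoc, ← mul_pow]
    ring_nf
  have hr0 : 0 ≤ 2 * Q⁻¹ * Real.sqrt (ℓ * d ℓ) := by positivity
  have := hlow.trans hup
  rw [← hrhs] at this
  exact (pow_le_pow_iff_left₀ (hτ0 _) hr0 (by omega)).mp this
end

section
/- Let X be a Banach space, F ⊆ X compact, and let φ₀ ∈ F satisfy ‖φ₀‖ ≥ η max_{φ ∈ F} ‖φ‖ for some 0 < η ≤ 1. Let X₁ = span{φ₀} and for φ ∈ X let P₁(φ) denote a best approximation of φ from X₁. Then max_{φ ∈ F} ‖φ − P₁(φ)‖ ≤ 2(1 + η^{-1}) · d₁(F, X), where d₁(F, X) = inf over one-dimensional subspaces Y of max_{φ ∈ F} dist(φ, Y). -/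
open Metric

set_option maxHeartbeats 1000000 in
theorem stmt_9 {X : Type*} [NormedAddCommGroup X] [NormedSpace ℝ X] [CompleteSpace X]
    (F : Set X) (hFc : IsCompact F) (hFne : F.Nonempty)
    (hFbd : ∀ φ ∈ F, ‖φ‖ ≤ 1)
    (η : ℝ) (hη0 : 0 < η) (hη1 : η ≤ 1)
    (φ₀ : X) (hφ₀F : φ₀ ∈ F)
    (hφ₀ : ∀ φ ∈ F, η * ‖φ‖ ≤ ‖φ₀‖)
    (P₁ : X → X)
    (hP₁mem : ∀ φ : X, P₁ φ ∈ Submodule.span ℝ {φ₀})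
    (hP₁best : ∀ φ : X, ‖φ - P₁ φ‖ =
      Metric.infDist φ (Submodule.span ℝ {φ₀} : Submodule ℝ X)) :
    ∀ φ ∈ F, ‖φ - P₁ φ‖ ≤ 2 * (1 + η⁻¹) *
      ⨅ Y : {Y : Submodule ℝ X // Module.finrank ℝ Y = 1},
        ⨆ ψ : F, Metric.infDist (ψ : X) (Y.1 : Set X) := by
  intro φ hφ
  set C : ℝ := 2 * (1 + η⁻¹) with hC
  have hu1 : (1:ℝ) ≤ η⁻¹ := (one_le_inv_iff₀).2 ⟨hη0, hη1⟩
  have hCpos : 0 < C := by rw [hC]; nlinarith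
  have hiInfnonneg : 0 ≤ ⨅ Y : {Y : Submodule ℝ X // Module.finrank ℝ Y = 1},
      ⨆ ψ : F, Metric.infDist (ψ : X) (Y.1 : Set X) :=
    Real.iInf_nonneg fun Y => Real.iSup_nonneg fun ψ => infDist_nonneg
  by_cases hφ₀ne : φ₀ = 0
  · -- then every element of F is 0
    have hφ0 : φ = 0 := by
      have h := hφ₀ φ hφ
      rw [hφ₀ne, norm_zero] at h
      have : ‖φ‖ ≤ 0 := by nlinarith
      simpa using le_antisymm this (norm_nonneg φ)
    have : ‖φ - P₁ φ‖ = 0 := by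
      rw [hP₁best, hφ0]
      exact infDist_zero_of_mem (Submodule.zero_mem _)
    rw [this]
    exact mul_nonneg hCpos.le hiInfnonneg
  · -- main case
    have hP0 : 0 < ‖φ₀‖ := norm_pos_iff.2 hφ₀ne
    -- per-Y bound
    have main : ∀ Y : Submodule ℝ X, Module.finrank ℝ Y = 1 →
        ‖φ - P₁ φ‖ ≤ C * ⨆ ψ : F, Metric.infDist (ψ : X) (Y : Set X) := by
      intro Y hY
      set e : ℝ := ⨆ ψ : F, Metric.infDist (ψ : X) (Y : Set X) with he
      have hbdd : BddAbove (Set.range fun ψ : F => Metric.infDist (ψ : X) (Y : Set X)) := by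
        refine ⟨1, ?_⟩
        rintro _ ⟨ψ, rfl⟩
        calc Metric.infDist (ψ : X) (Y : Set X) ≤ dist (ψ : X) 0 :=
              infDist_le_dist_of_mem (Submodule.zero_mem Y)
          _ = ‖(ψ : X)‖ := by simp
          _ ≤ 1 := hFbd ψ ψ.2
      have hle : ∀ ψ : F, Metric.infDist (ψ : X) (Y : Set X) ≤ e :=
        fun ψ => le_ciSup hbdd ψ
      have he0 : 0 ≤ e := le_trans infDist_nonneg (hle ⟨φ₀, hφ₀F⟩)
      rw [hP₁best]
      by_cases hcase : ‖φ₀‖ ≤ 2 * e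
      · -- easy case
        have h1 : Metric.infDist φ (Submodule.span ℝ {φ₀} : Submodule ℝ X) ≤ ‖φ‖ := by
          calc Metric.infDist φ _ ≤ dist φ 0 :=
                infDist_le_dist_of_mem (Submodule.zero_mem _)
            _ = ‖φ‖ := by simp
        have h2 := hφ₀ φ hφ
        have hinv : η * η⁻¹ = 1 := mul_inv_cancel₀ hη0.ne'
        rw [hC]
        nlinarith [norm_nonneg φ, mul_le_mul_of_nonneg_left h2 (le_of_lt (inv_pos.2 hη0)),
          mul_nonneg (le_of_lt (inv_pos.2 hη0)) he0]
      · push_neg at hcase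
        -- get the spanning vector of Y
        obtain ⟨v, hv0, hvspan⟩ := (finrank_eq_one_iff' (K := ℝ) (V := Y)).mp hY
        apply le_of_forall_pos_le_add
        intro ε hε
        set ε' : ℝ := min (ε / C) ((‖φ₀‖ - 2 * e) / 2) with hε'
        have hε'pos : 0 < ε' := lt_min (div_pos hε hCpos) (by linarith)
        have hε'le : C * ε' ≤ ε := by
          calc C * ε' ≤ C * (ε / C) :=
              mul_le_mul_of_nonneg_left (min_le_left _ _) hCpos.le
            _ = ε := by field_simp
        have ht : e + ε' ≤ ‖φ₀‖ / 2 := by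
          have := min_le_right (ε / C) ((‖φ₀‖ - 2 * e) / 2)
          rw [← hε'] at this
          linarith
        set t : ℝ := e + ε' with htdef
        have ht0 : 0 < t := by positivity
        -- find approximants
        have hYne : (Y : Set X).Nonempty := ⟨0, Submodule.zero_mem Y⟩
        have getpt : ∀ ψ : X, ψ ∈ F → ∃ a : ℝ, ‖ψ - a • (v : X)‖ < t := by
          intro ψ hψ
          have h1 : Metric.infDist ψ (Y : Set X) < t := by
            have := hle ⟨ψ, hψ⟩
            simp only at this
            linarith
          obtain ⟨z, hzY, hz⟩ := (Metric.infDist_lt_iff hYne).mp h1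
          obtain ⟨a, ha⟩ := hvspan ⟨z, hzY⟩
          refine ⟨a, ?_⟩
          have haz : a • (v : X) = z := congrArg Subtype.val ha
          rw [haz, ← dist_eq_norm]
          exact hz
        obtain ⟨a, haφ⟩ := getpt φ hφ
        obtain ⟨a₀, ha₀φ⟩ := getpt φ₀ hφ₀F
        -- lower bound on ‖a₀ • v‖
        have hlow : ‖φ₀‖ / 2 ≤ ‖a₀ • (v : X)‖ := by
          have := norm_sub_norm_le φ₀ (a₀ • (v : X))
          linarith
        have ha₀v : a₀ • (v : X) ≠ 0 := by
          intro h
          rw [h, norm_zero] at hlow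
          linarith
        have ha₀ : a₀ ≠ 0 := fun h => ha₀v (by rw [h, zero_smul])
        set c : ℝ := a / a₀ with hcdef
        have hkey : a • (v : X) - c • φ₀ = c • (a₀ • (v : X) - φ₀) := by
          rw [smul_sub, smul_smul, hcdef, div_mul_cancel₀ a ha₀]
        have havnorm : ‖a • (v : X)‖ = |c| * ‖a₀ • (v : X)‖ := by
          have : c • (a₀ • (v : X)) = a • (v : X) := by
            rw [smul_smul, hcdef, div_mul_cancel₀ a ha₀]
          rw [← this, norm_smul, Real.norm_eq_abs]
        have hav_ub : ‖a • (v : X)‖ ≤ ‖φ‖ + t := by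
          have h1 : ‖a • (v : X)‖ - ‖φ‖ ≤ ‖a • (v : X) - φ‖ := norm_sub_norm_le _ _
          have h2 : ‖a • (v : X) - φ‖ = ‖φ - a • (v : X)‖ := norm_sub_rev _ _
          linarith
        have hc2 : |c| * (‖φ₀‖ / 2) ≤ ‖φ‖ + t := by
          calc |c| * (‖φ₀‖ / 2) ≤ |c| * ‖a₀ • (v : X)‖ :=
              mul_le_mul_of_nonneg_left hlow (abs_nonneg c)
            _ = ‖a • (v : X)‖ := havnorm.symm
            _ ≤ ‖φ‖ + t := hav_ub
        -- the candidate approximation in span φ₀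
        have hmem : c • φ₀ ∈ (Submodule.span ℝ {φ₀} : Set X) :=
          Submodule.smul_mem _ c (Submodule.mem_span_singleton_self φ₀)
        have hstep : Metric.infDist φ (Submodule.span ℝ {φ₀} : Submodule ℝ X)
            ≤ t + |c| * t := by
          calc Metric.infDist φ _ ≤ dist φ (c • φ₀) := infDist_le_dist_of_mem hmem
            _ = ‖φ - c • φ₀‖ := dist_eq_norm _ _
            _ ≤ ‖φ - a • (v : X)‖ + ‖a • (v : X) - c • φ₀‖ := by
                have : φ - c • φ₀ = (φ - a • (v : X)) + (a • (v : X) - c • φ₀) := by abel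
                rw [this]; exact norm_add_le _ _
            _ ≤ t + |c| * t := by
                have h3 : ‖a • (v : X) - c • φ₀‖ = |c| * ‖a₀ • (v : X) - φ₀‖ := by
                  rw [hkey, norm_smul, Real.norm_eq_abs]
                have h4 : ‖a₀ • (v : X) - φ₀‖ = ‖φ₀ - a₀ • (v : X)‖ := norm_sub_rev _ _
                have h5 : |c| * ‖a₀ • (v : X) - φ₀‖ ≤ |c| * t := by
                  rw [h4]
                  exact mul_le_mul_of_nonneg_left ha₀φ.le (abs_nonneg c)
                linarith
        -- final arithmetic
        have hφub : ‖φ‖ ≤ η⁻¹ * ‖φ₀‖ := by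
          have h2 := hφ₀ φ hφ
          have hinv : η * η⁻¹ = 1 := mul_inv_cancel₀ hη0.ne'
          nlinarith [mul_le_mul_of_nonneg_left h2 (le_of_lt (inv_pos.2 hη0))]
        have hCt : t + |c| * t ≤ C * t := by
          rw [hC]
          nlinarith [mul_le_mul_of_nonneg_left hc2 ht0.le,
            mul_le_mul_of_nonneg_left hφub ht0.le,
            mul_le_mul_of_nonneg_left ht ht0.le, hP0, ht0, abs_nonneg c]
        calc Metric.infDist φ (Submodule.span ℝ {φ₀} : Submodule ℝ X) ≤ t + |c| * t := hstep
          _ ≤ C * t := hCt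
          _ = C * e + C * ε' := by rw [htdef]; ring
          _ ≤ C * e + ε := by linarith
    -- conclude using le_ciInf
    have : Nonempty {Y : Submodule ℝ X // Module.finrank ℝ Y = 1} :=
      ⟨⟨Submodule.span ℝ {φ₀}, finrank_span_singleton hφ₀ne⟩⟩
    have hdiv : ‖φ - P₁ φ‖ / C ≤ ⨅ Y : {Y : Submodule ℝ X // Module.finrank ℝ Y = 1},
        ⨆ ψ : F, Metric.infDist (ψ : X) (Y.1 : Set X) := by
      apply le_ciInf
      intro Y
      rw [div_le_iff₀ hCpos, mul_comm]
      exact main Y.1 Y.2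
    have := mul_le_mul_of_nonneg_left hdiv hCpos.le
    rwa [mul_div_cancel₀ _ hCpos.ne'] at this
end

section
/- Let A = (a_{i,j})_{i,j ≥ 0} be an infinite lower triangular real matrix and (τ_n), (γ_n), (d_m) nonnegative sequences satisfying: (Q1) γ_n τ_n ≤ |a_{n,n}| ≤ τ_n for all n; (Q2) |a_{i,j}| ≤ τ_j for all j < i. Suppose moreover that for a fixed K ≥ 2, N ≥ 0, and 1 ≤ m < K there is an m-dimensional subspace W ⊆ ℝ^K with orthogonal projection P such that each row g_i = (a_{N+i, N+1},…,a_{N+i, N+K}), i = 1,…,K, of the K×K block satisfies ‖g_i − P g_i‖ ≤ √K · d_m. Then ∏_{i=1}^K γ_{N+i}² τ_{N+i}² ≤ 2^K K^{K−m} (∑_{i=1}^K τ_{N+i}²)^m d_m^{2(K−m)}. -/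
open Finset Matrix
open scoped RealInnerProductSpace

lemma amgm12 {n : ℕ} (hn : 0 < n) (x : Fin n → ℝ) (hx : ∀ i, 0 ≤ x i) :
    ∏ i, x i ≤ ((∑ i, x i) / n) ^ n := by
  have hn' : (0:ℝ) < n := by exact_mod_cast hn
  have h := Real.geom_mean_le_arith_mean_weighted Finset.univ
      (fun _ => (n:ℝ)⁻¹) x (fun _ _ => by positivity)
      (by simp [Finset.card_univ]; field_simp) (fun i _ => hx i)
  have h2 : (∏ i, x i ^ ((n:ℝ)⁻¹)) ^ (n:ℕ) ≤ ((∑ i, x i) / n) ^ n := by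
    apply pow_le_pow_left₀ (Finset.prod_nonneg fun i _ => Real.rpow_nonneg (hx i) _)
    calc ∏ i, x i ^ ((n:ℝ)⁻¹) ≤ ∑ i : Fin n, (n:ℝ)⁻¹ * x i := h
    _ = (∑ i, x i) / n := by rw [← Finset.mul_sum]; ring
  calc ∏ i, x i = (∏ i, x i ^ ((n:ℝ)⁻¹)) ^ (n:ℕ) := by
        rw [← Finset.prod_pow]
        refine (Finset.prod_congr rfl fun i _ => ?_).symm
        rw [← Real.rpow_natCast (x i ^ ((n:ℝ)⁻¹)) n, ← Real.rpow_mul (hx i),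
          inv_mul_cancel₀ (ne_of_gt hn'), Real.rpow_one]
    _ ≤ _ := h2

lemma entropy12 {a b : ℕ} (ha : 0 < a) (hb : 0 < b) :
    ((a:ℝ) + b) ^ (a + b) ≤ 2 ^ (a + b) * a ^ a * b ^ b := by
  have ha' : (0:ℝ) < a := by exact_mod_cast ha
  have hb' : (0:ℝ) < b := by exact_mod_cast hb
  have hs : (0:ℝ) < a + b := by linarith
  set s : ℝ := (a:ℝ) + b with hsdef
  have h := Real.geom_mean_le_arith_mean2_weighted
    (le_of_lt (div_pos ha' hs)) (le_of_lt (div_pos hb' hs))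
    (le_of_lt (div_pos hs ha')) (le_of_lt (div_pos hs hb'))
    (by field_simp; exact hsdef.symm)
  have h2 : (a:ℝ)/s * (s/a) + (b:ℝ)/s * (s/b) = 2 := by field_simp; ring
  rw [h2] at h
  -- raise to power s (as rpow), exponents (a/s)*s = a etc.
  have h3 : ((s/a) ^ ((a:ℝ)/s) * (s/b) ^ ((b:ℝ)/s)) ^ (s:ℝ) ≤ (2:ℝ) ^ (s:ℝ) := by
    apply Real.rpow_le_rpow (by positivity) h (le_of_lt hs)
  rw [Real.mul_rpow (by positivity) (by positivity)] at h3
  have e1 : ((s/(a:ℝ)) ^ ((a:ℝ)/s)) ^ (s:ℝ) = (s/a) ^ (a:ℕ) := by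
    rw [← Real.rpow_natCast (s/(a:ℝ)) a, ← Real.rpow_mul (by positivity),
      div_mul_cancel₀ _ (ne_of_gt hs)]
  have e2 : ((s/(b:ℝ)) ^ ((b:ℝ)/s)) ^ (s:ℝ) = (s/b) ^ (b:ℕ) := by
    rw [← Real.rpow_natCast (s/(b:ℝ)) b, ← Real.rpow_mul (by positivity),
      div_mul_cancel₀ _ (ne_of_gt hs)]
  have e3 : (2:ℝ) ^ (s:ℝ) = 2 ^ (a+b:ℕ) := by
    rw [← Real.rpow_natCast 2 (a+b)]; congr 1; push_cast [hsdef]; ring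
  rw [e1, e2, e3] at h3
  have hab : (0:ℝ) ≤ (a:ℝ)^a * (b:ℝ)^b := by positivity
  calc s ^ (a+b) = ((s/a)^(a:ℕ) * (s/b)^(b:ℕ)) * ((a:ℝ)^a * (b:ℝ)^b) := by
        rw [div_pow, div_pow, pow_add]; field_simp
    _ ≤ 2 ^ (a+b) * ((a:ℝ)^a * (b:ℝ)^b) := by
        exact mul_le_mul_of_nonneg_right h3 hab
    _ = 2 ^ (a + b) * a ^ a * b ^ b := by ring

lemma hadamard12 {n : ℕ} (f : Fin n → EuclideanSpace ℝ (Fin n)) :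
    (Matrix.det (Matrix.of fun i j => f i j)) ^ 2 ≤ ∏ i, ‖f i‖ ^ 2 := by
  haveI : Fact (Module.finrank ℝ (EuclideanSpace ℝ (Fin n)) = n) :=
    ⟨finrank_euclideanSpace_fin⟩
  set std := EuclideanSpace.basisFun (Fin n) ℝ with hstd
  set o : Orientation ℝ (EuclideanSpace ℝ (Fin n)) (Fin n) := std.toBasis.orientation with ho
  have h := o.abs_volumeForm_apply_le f
  rw [o.volumeForm_robust' std f] at h
  have h2 : std.toBasis.toMatrix f = (Matrix.of fun i j => f i j)ᵀ := by
    ext i j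
    simp only [Module.Basis.toMatrix_apply, Matrix.transpose_apply, Matrix.of_apply, OrthonormalBasis.coe_toBasis_repr_apply]; rfl
  have h5 : Matrix.det (Matrix.of fun i j => f i j) = std.toBasis.det f := by
    rw [Module.Basis.det_apply, h2, Matrix.det_transpose]
  rw [h5]
  calc (std.toBasis.det f) ^ 2 = |std.toBasis.det f| ^ 2 := (sq_abs _).symm
    _ ≤ (∏ i, ‖f i‖) ^ 2 := pow_le_pow_left₀ (abs_nonneg _) h 2
    _ = ∏ i, ‖f i‖ ^ 2 := by rw [Finset.prod_pow]

lemma hadamard_col {n : ℕ} (M : Matrix (Fin n) (Fin n) ℝ) :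
    M.det ^ 2 ≤ ∏ j : Fin n, ∑ i : Fin n, (M i j) ^ 2 := by
  let f : Fin n → EuclideanSpace ℝ (Fin n) := fun j => (WithLp.equiv 2 _).symm (fun i => M i j)
  have hM : (Matrix.of fun i j => f i j) = Mᵀ := rfl
  have h := hadamard12 f
  rw [hM, Matrix.det_transpose] at h
  refine h.trans_eq (Finset.prod_congr rfl fun j _ => ?_)
  rw [EuclideanSpace.norm_eq, Real.sq_sqrt (Finset.sum_nonneg fun i _ => by positivity)]
  simp [f, sq_abs]

set_option maxHeartbeats 2000000 in
theorem stmt_12 (A : ℕ → ℕ → ℝ) (τ γ d : ℕ → ℝ)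
    (hτ0 : ∀ n, 0 ≤ τ n) (hγ0 : ∀ n, 0 ≤ γ n) (hd0 : ∀ n, 0 ≤ d n)
    (hlower : ∀ i j : ℕ, i < j → A i j = 0)
    (hQ1 : ∀ n : ℕ, γ n * τ n ≤ |A n n| ∧ |A n n| ≤ τ n)
    (hQ2 : ∀ i j : ℕ, j < i → |A i j| ≤ τ j)
    (K N m : ℕ) (hK : 2 ≤ K) (hm : 1 ≤ m) (hmK : m < K)
    (W : Submodule ℝ (EuclideanSpace ℝ (Fin K)))
    (hW : Module.finrank ℝ W = m)
    (g : Fin K → EuclideanSpace ℝ (Fin K))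
    (hg : ∀ i j : Fin K, g i j = A (N + 1 + i) (N + 1 + j))
    (hrows : ∀ i : Fin K,
      ‖g i - (W.orthogonalProjectionOnto (g i) : EuclideanSpace ℝ (Fin K))‖ ≤
        Real.sqrt K * d m) :
    ∏ i ∈ Finset.Icc 1 K, (γ (N + i)) ^ 2 * (τ (N + i)) ^ 2 ≤
      2 ^ K * (K : ℝ) ^ (K - m) * (∑ i ∈ Finset.Icc 1 K, (τ (N + i)) ^ 2) ^ m *
        (d m) ^ (2 * (K - m)) := by
  have hdm : 0 ≤ d m := hd0 m
  set k := K - m with hkdef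
  have hmk : m + k = K := by omega
  have hk1 : 1 ≤ k := by omega
  set T : ℝ := ∑ i ∈ Finset.Icc 1 K, (τ (N + i)) ^ 2 with hT
  have hT0 : 0 ≤ T := Finset.sum_nonneg fun i _ => sq_nonneg _
  have hTfin : ∑ j : Fin K, (τ (N + 1 + (j:ℕ))) ^ 2 = T := by
    rw [hT, show Finset.Icc 1 K = Finset.Ico 1 (K+1) by rw [Finset.Ico_add_one_right_eq_Icc],
      Finset.sum_Ico_eq_sum_range]
    simp only [Nat.add_sub_cancel]
    rw [← Fin.sum_univ_eq_sum_range (fun i => (τ (N + (1 + i))) ^ 2) K]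
    exact Finset.sum_congr rfl fun j _ => by rw [show N + (1 + (j:ℕ)) = N + 1 + j by omega]
  -- entry bounds
  have hentry : ∀ i j : Fin K, |g i j| ≤ τ (N + 1 + (j:ℕ)) := by
    intro i j
    rw [hg i j]
    rcases lt_trichotomy (j:ℕ) (i:ℕ) with hlt | heq | hgt
    · exact hQ2 _ _ (by omega)
    · rw [show N + 1 + (i:ℕ) = N + 1 + (j:ℕ) by omega]
      exact (hQ1 _).2
    · rw [hlower _ _ (by omega)]
      simpa using hτ0 _
  have hgT : ∀ i : Fin K, ‖g i‖ ^ 2 ≤ T := by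
    intro i
    have hnorm : ‖g i‖ ^ 2 = ∑ j : Fin K, (g i j) ^ 2 := by
      rw [EuclideanSpace.norm_eq, Real.sq_sqrt (Finset.sum_nonneg fun j _ => by positivity)]
      simp [sq_abs]
    rw [hnorm, ← hTfin]
    refine Finset.sum_le_sum fun j _ => ?_
    calc (g i j) ^ 2 = |g i j| ^ 2 := (sq_abs _).symm
      _ ≤ (τ (N + 1 + (j:ℕ))) ^ 2 := pow_le_pow_left₀ (abs_nonneg _) (hentry i j) 2
  -- the matrix G
  set G : Matrix (Fin K) (Fin K) ℝ := Matrix.of (fun i j => g i j) with hGdef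
  have htri : G.BlockTriangular OrderDual.toDual := by
    intro i j hij
    have : (i:ℕ) < (j:ℕ) := hij
    show g i j = 0
    rw [hg i j]
    exact hlower _ _ (by omega)
  have hdetG : G.det = ∏ i : Fin K, A (N + 1 + (i:ℕ)) (N + 1 + (i:ℕ)) := by
    rw [Matrix.det_of_lowerTriangular G htri]
    exact Finset.prod_congr rfl fun i _ => hg i i
  have stepA : ∏ i ∈ Finset.Icc 1 K, (γ (N + i)) ^ 2 * (τ (N + i)) ^ 2 ≤ G.det ^ 2 := by
    rw [hdetG, ← Finset.prod_pow]
    rw [show Finset.Icc 1 K = Finset.Ico 1 (K+1) by rw [Finset.Ico_add_one_right_eq_Icc],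
      Finset.prod_Ico_eq_prod_range]
    simp only [Nat.add_sub_cancel]
    rw [← Fin.prod_univ_eq_prod_range (fun i => (γ (N + (1 + i))) ^ 2 * (τ (N + (1 + i))) ^ 2) K]
    refine Finset.prod_le_prod (fun i _ => by positivity) fun i _ => ?_
    have h1 : γ (N + (1 + (i:ℕ))) * τ (N + (1 + (i:ℕ))) ≤ |A (N + 1 + (i:ℕ)) (N + 1 + (i:ℕ))| := by
      rw [show N + (1 + (i:ℕ)) = N + 1 + (i:ℕ) by omega]
      exact (hQ1 _).1
    calc γ (N + (1 + (i:ℕ))) ^ 2 * τ (N + (1 + (i:ℕ))) ^ 2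
        = (γ (N + (1 + (i:ℕ))) * τ (N + (1 + (i:ℕ)))) ^ 2 := by ring
      _ ≤ |A (N + 1 + (i:ℕ)) (N + 1 + (i:ℕ))| ^ 2 :=
          pow_le_pow_left₀ (mul_nonneg (hγ0 _) (hτ0 _)) h1 2
      _ = A (N + 1 + (i:ℕ)) (N + 1 + (i:ℕ)) ^ 2 := sq_abs _
  -- orthogonal decomposition data
  haveI : FiniteDimensional ℝ (EuclideanSpace ℝ (Fin K)) := by infer_instance
  have horth : Module.finrank ℝ (Wᗮ : Submodule ℝ (EuclideanSpace ℝ (Fin K))) = k := by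
    have h1 := Submodule.finrank_add_finrank_orthogonal (K := W)
    rw [hW, finrank_euclideanSpace_fin] at h1
    omega
  let b₁ : OrthonormalBasis (Fin m) ℝ W := (stdOrthonormalBasis ℝ W).reindex (finCongr hW)
  let b₂ : OrthonormalBasis (Fin k) ℝ (Wᗮ : Submodule ℝ (EuclideanSpace ℝ (Fin K))) :=
    (stdOrthonormalBasis ℝ _).reindex (finCongr horth)
  let u : Fin K → W := fun i => W.orthogonalProjectionOnto (g i)
  let v : Fin K → (Wᗮ : Submodule ℝ (EuclideanSpace ℝ (Fin K))) :=
    fun i => ⟨g i - u i, Submodule.sub_starProjection_mem_orthogonal (K := W) (g i)⟩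
  have hguv : ∀ i, g i = (u i : EuclideanSpace ℝ (Fin K)) + (v i : EuclideanSpace ℝ (Fin K)) := by
    intro i; simp [u, v]
  let e : Fin m ⊕ Fin k ≃ Fin K := finSumFinEquiv.trans (finCongr hmk)
  let F : Fin K → (Fin m ⊕ Fin k) → ℝ :=
    fun i => Sum.elim (fun a => b₁.repr (u i) a) (fun c => b₂.repr (v i) c)
  set D : Matrix (Fin K) (Fin K) ℝ := Matrix.of (fun i j => F i (e.symm j)) with hDdef
  have expand : ∀ (p : ℕ) (x y : EuclideanSpace ℝ (Fin p)), ⟪x, y⟫ = ∑ a, x a * y a := by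
    intro p x y
    simp [PiLp.inner_apply, RCLike.inner_apply, conj_trivial]
    exact Finset.sum_congr rfl fun _ _ => mul_comm _ _
  have huv0 : ∀ i j : Fin K, ⟪(u i : EuclideanSpace ℝ (Fin K)), (v j : EuclideanSpace ℝ (Fin K))⟫ = 0 :=
    fun i j => Submodule.inner_right_of_mem_orthogonal (u i).2 (v j).2
  have hGram : G * Gᵀ = D * Dᵀ := by
    ext i j
    have hL : (G * Gᵀ) i j = ⟪g i, g j⟫ := by
      simp [Matrix.mul_apply, hGdef, PiLp.inner_apply, RCLike.inner_apply, conj_trivial]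
      exact Finset.sum_congr rfl fun _ _ => mul_comm _ _
    have hsum : (D * Dᵀ) i j = ∑ s : Fin m ⊕ Fin k, F i s * F j s := by
      rw [Matrix.mul_apply]
      rw [← Equiv.sum_comp e.symm (fun s => F i s * F j s)]
      simp [hDdef]
    have hR : (D * Dᵀ) i j = ⟪(u i : EuclideanSpace ℝ (Fin K)), (u j : EuclideanSpace ℝ (Fin K))⟫
        + ⟪(v i : EuclideanSpace ℝ (Fin K)), (v j : EuclideanSpace ℝ (Fin K))⟫ := by
      rw [hsum, Fintype.sum_sum_type]
      have hu : ∑ a : Fin m, F i (Sum.inl a) * F j (Sum.inl a)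
          = ⟪(u i : EuclideanSpace ℝ (Fin K)), (u j : EuclideanSpace ℝ (Fin K))⟫ := by
        have h1 : ⟪b₁.repr (u i), b₁.repr (u j)⟫ = ⟪u i, u j⟫ := b₁.repr.inner_map_map (u i) (u j)
        rw [← Submodule.coe_inner, ← h1, expand]
        rfl
      have hv : ∑ c : Fin k, F i (Sum.inr c) * F j (Sum.inr c)
          = ⟪(v i : EuclideanSpace ℝ (Fin K)), (v j : EuclideanSpace ℝ (Fin K))⟫ := by
        have h1 : ⟪b₂.repr (v i), b₂.repr (v j)⟫ = ⟪v i, v j⟫ := b₂.repr.inner_map_map (v i) (v j)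
        rw [← Submodule.coe_inner, ← h1, expand]
        rfl
      rw [hu, hv]
    have h0 : ⟪(v i : EuclideanSpace ℝ (Fin K)), (u j : EuclideanSpace ℝ (Fin K))⟫ = 0 := by
      rw [real_inner_comm]; exact huv0 j i
    rw [hL, hR, hguv i, hguv j, inner_add_left, inner_add_right, inner_add_right,
      huv0 i j, h0]
    ring
  have hdet2 : G.det ^ 2 = D.det ^ 2 := by
    have h1 : G.det * G.det = D.det * D.det := by
      calc G.det * G.det = (G * Gᵀ).det := by rw [Matrix.det_mul, Matrix.det_transpose]
        _ = (D * Dᵀ).det := by rw [hGram]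
        _ = D.det * D.det := by rw [Matrix.det_mul, Matrix.det_transpose]
    rw [sq, sq, h1]
  have hHad : D.det ^ 2 ≤ ∏ j : Fin K, ∑ i : Fin K, D i j ^ 2 := hadamard_col D
  have hsplitprod : ∏ j : Fin K, (∑ i : Fin K, D i j ^ 2)
      = (∏ a : Fin m, ∑ i : Fin K, (b₁.repr (u i) a) ^ 2)
        * (∏ c : Fin k, ∑ i : Fin K, (b₂.repr (v i) c) ^ 2) := by
    rw [← Equiv.prod_comp e (fun j => ∑ i : Fin K, D i j ^ 2), Fintype.prod_sum_type]
    congr 1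
    · refine Finset.prod_congr rfl fun a _ => Finset.sum_congr rfl fun i _ => ?_
      simp [hDdef, F]
    · refine Finset.prod_congr rfl fun c _ => Finset.sum_congr rfl fun i _ => ?_
      simp [hDdef, F]
  have hnormu : ∀ i : Fin K, ∑ a : Fin m, (b₁.repr (u i) a) ^ 2 ≤ T := by
    intro i
    have h1 : ∑ a : Fin m, (b₁.repr (u i) a) ^ 2 = ‖b₁.repr (u i)‖ ^ 2 := by
      rw [EuclideanSpace.norm_eq, Real.sq_sqrt (Finset.sum_nonneg fun a _ => by positivity)]
      simp [sq_abs]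
    rw [h1, b₁.repr.norm_map]
    have h3 : ‖g i‖ ^ 2 = ‖(u i : EuclideanSpace ℝ (Fin K))‖ ^ 2
        + ‖(v i : EuclideanSpace ℝ (Fin K))‖ ^ 2 := by
      rw [hguv i, norm_add_sq_real, huv0 i i]; ring
    have h4 := hgT i
    have h5 : ‖u i‖ = ‖(u i : EuclideanSpace ℝ (Fin K))‖ := rfl
    rw [h5]
    nlinarith [sq_nonneg ‖(v i : EuclideanSpace ℝ (Fin K))‖]
  have hnormv : ∀ i : Fin K, ∑ c : Fin k, (b₂.repr (v i) c) ^ 2 ≤ (K:ℝ) * d m ^ 2 := by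
    intro i
    have h1 : ∑ c : Fin k, (b₂.repr (v i) c) ^ 2 = ‖b₂.repr (v i)‖ ^ 2 := by
      rw [EuclideanSpace.norm_eq, Real.sq_sqrt (Finset.sum_nonneg fun c _ => by positivity)]
      simp [sq_abs]
    rw [h1, b₂.repr.norm_map]
    have h5 : ‖v i‖ = ‖(v i : EuclideanSpace ℝ (Fin K))‖ := rfl
    have h6 : ‖(v i : EuclideanSpace ℝ (Fin K))‖ ≤ Real.sqrt K * d m := hrows i
    calc ‖v i‖ ^ 2 ≤ (Real.sqrt K * d m) ^ 2 := by
          rw [h5]; exact pow_le_pow_left₀ (norm_nonneg _) h6 2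
      _ = (K:ℝ) * d m ^ 2 := by
          rw [mul_pow, Real.sq_sqrt (by positivity : (0:ℝ) ≤ (K:ℕ))]
  have hucol : ∑ a : Fin m, ∑ i : Fin K, (b₁.repr (u i) a) ^ 2 ≤ (K:ℝ) * T := by
    rw [Finset.sum_comm]
    calc ∑ i : Fin K, ∑ a : Fin m, (b₁.repr (u i) a) ^ 2 ≤ ∑ _i : Fin K, T :=
          Finset.sum_le_sum fun i _ => hnormu i
      _ = (K:ℝ) * T := by simp [Finset.sum_const, nsmul_eq_mul]
  have hvcol : ∑ c : Fin k, ∑ i : Fin K, (b₂.repr (v i) c) ^ 2 ≤ (K:ℝ) * ((K:ℝ) * d m ^ 2) := by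
    rw [Finset.sum_comm]
    calc ∑ i : Fin K, ∑ c : Fin k, (b₂.repr (v i) c) ^ 2 ≤ ∑ _i : Fin K, (K:ℝ) * d m ^ 2 :=
          Finset.sum_le_sum fun i _ => hnormv i
      _ = (K:ℝ) * ((K:ℝ) * d m ^ 2) := by simp [Finset.sum_const, nsmul_eq_mul]
  have hP1 : ∏ a : Fin m, (∑ i : Fin K, (b₁.repr (u i) a) ^ 2) ≤ (((K:ℝ) * T) / m) ^ m := by
    refine le_trans (amgm12 (by omega) _ (fun a => Finset.sum_nonneg fun i _ => sq_nonneg _)) ?_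
    have hm0 : (0:ℝ) < m := by exact_mod_cast hm
    exact pow_le_pow_left₀ (by positivity) ((div_le_div_iff_of_pos_right hm0).mpr hucol) m
  have hP2 : ∏ c : Fin k, (∑ i : Fin K, (b₂.repr (v i) c) ^ 2)
      ≤ (((K:ℝ) * ((K:ℝ) * d m ^ 2)) / k) ^ k := by
    refine le_trans (amgm12 (by omega) _ (fun c => Finset.sum_nonneg fun i _ => sq_nonneg _)) ?_
    have hk0 : (0:ℝ) < k := by exact_mod_cast hk1
    exact pow_le_pow_left₀ (by positivity) ((div_le_div_iff_of_pos_right hk0).mpr hvcol) k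
  have hent := entropy12 (a := m) (b := k) (by omega) (by omega)
  have hKr : ((m:ℝ) + (k:ℝ)) = (K:ℝ) := by exact_mod_cast congrArg (Nat.cast (R := ℝ)) hmk
  rw [hKr, hmk] at hent
  have hnum : (((K:ℝ) * T) / m) ^ m * ((((K:ℝ) * ((K:ℝ) * d m ^ 2))) / k) ^ k
      ≤ 2 ^ K * (K:ℝ) ^ k * T ^ m * d m ^ (2 * k) := by
    rw [div_pow, div_pow, div_mul_div_comm, div_le_iff₀ (by positivity)]
    calc ((K:ℝ) * T) ^ m * ((K:ℝ) * ((K:ℝ) * d m ^ 2)) ^ k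
        = (K:ℝ) ^ K * ((K:ℝ) ^ k * T ^ m * d m ^ (2 * k)) := by rw [← hmk]; ring
      _ ≤ (2 ^ K * (m:ℝ) ^ m * (k:ℝ) ^ k) * ((K:ℝ) ^ k * T ^ m * d m ^ (2 * k)) :=
          mul_le_mul_of_nonneg_right hent (by positivity)
      _ = 2 ^ K * (K:ℝ) ^ k * T ^ m * d m ^ (2 * k) * ((m:ℝ) ^ m * (k:ℝ) ^ k) := by ring
  calc ∏ i ∈ Finset.Icc 1 K, (γ (N + i)) ^ 2 * (τ (N + i)) ^ 2
      ≤ G.det ^ 2 := stepA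
    _ = D.det ^ 2 := hdet2
    _ ≤ ∏ j : Fin K, ∑ i : Fin K, D i j ^ 2 := hHad
    _ = _ * _ := hsplitprod
    _ ≤ (((K:ℝ) * T) / m) ^ m * ((((K:ℝ) * ((K:ℝ) * d m ^ 2))) / k) ^ k := by
        apply mul_le_mul hP1 hP2 (Finset.prod_nonneg fun c _ =>
          Finset.sum_nonneg fun i _ => sq_nonneg _) (by positivity)
    _ ≤ 2 ^ K * (K:ℝ) ^ k * T ^ m * d m ^ (2 * k) := hnum
end

section
/- Let (τ_n)_{n≥1} be a nonincreasing sequence of reals in [0,1], (d_n) nonnegative reals, and (γ_n) ⊆ (0,1], satisfying for all N ≥ 0, K ≥ 2, 1 ≤ m < K the Hilbert-space master inequality ∏_{i=1}^K τ_{N+i}² ≤ (∏_{i=1}^K γ_{N+i})^{-2} (K/m)^m (K/(K−m))^{K−m} τ_{N+1}^{2m} d_m^{2(K−m)}. Then for every n ≥ 2: τ_n ≤ √2 (∏_{i=1}^n γ_i^{1/n})^{-1} min_{1 ≤ m < n} d_m^{(n−m)/n}; in particular τ_{2ℓ} ≤ √2 (∏_{i=1}^{2ℓ} γ_i^{1/(2ℓ)})^{-1}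 √(d_ℓ) for every ℓ ≥ 1. -/
/-- Root extraction: if `x ^ k ≤ C` with `x ≥ 0`, `k ≥ 1`, then `x ≤ C ^ (k⁻¹)`. -/
lemma stmt13_root (x C : ℝ) (hx : 0 ≤ x) (k : ℕ) (hk : 0 < k) (h : x ^ k ≤ C) :
    x ≤ C ^ ((k : ℝ)⁻¹) := by
  have h1 : (x ^ k) ^ ((k : ℝ)⁻¹) ≤ C ^ ((k : ℝ)⁻¹) :=
    Real.rpow_le_rpow (pow_nonneg hx k) h (by positivity)
  rwa [← Real.rpow_natCast x k, ← Real.rpow_mul hx,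
    mul_inv_cancel₀ (by exact_mod_cast hk.ne'), Real.rpow_one] at h1

/-- The binomial-type factor is at most `2 ^ n`. -/
lemma stmt13_AB (n m : ℕ) (h1 : 1 ≤ m) (h2 : m < n) :
    ((n : ℝ) / m) ^ m * ((n : ℝ) / ((n : ℝ) - m)) ^ (n - m) ≤ 2 ^ n := by
  have hm0 : (0 : ℝ) < m := by exact_mod_cast h1
  have hn0 : (0 : ℝ) < n := lt_trans hm0 (by exact_mod_cast h2)
  have hnm : (0 : ℝ) < (n : ℝ) - m := by
    have : (m : ℝ) < n := by exact_mod_cast h2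
    linarith
  set a : ℝ := (n : ℝ) / m with ha
  set b : ℝ := (n : ℝ) / ((n : ℝ) - m) with hb
  have ha0 : 0 ≤ a := by positivity
  have hb0 : 0 ≤ b := by positivity
  have hgm : a ^ ((m : ℝ) / n) * b ^ (((n : ℝ) - m) / n) ≤ 2 := by
    have := Real.geom_mean_le_arith_mean2_weighted
      (w₁ := (m : ℝ) / n) (w₂ := ((n : ℝ) - m) / n) (p₁ := a) (p₂ := b)
      (by positivity) (by positivity) ha0 hb0 (by field_simp; ring)
    calc a ^ ((m : ℝ) / n) * b ^ (((n : ℝ) - m) / n)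
        ≤ (m : ℝ) / n * a + ((n : ℝ) - m) / n * b := this
      _ = 2 := by rw [ha, hb]; field_simp; ring
  have hpow := Real.rpow_le_rpow (by positivity) hgm (le_of_lt hn0)
  have hcast : ((n - m : ℕ) : ℝ) = (n : ℝ) - m := by
    rw [Nat.cast_sub h2.le]
  calc a ^ m * b ^ (n - m)
      = a ^ ((m : ℝ)) * b ^ (((n : ℝ) - m)) := by
        rw [← hcast, Real.rpow_natCast, Real.rpow_natCast]
    _ = (a ^ ((m : ℝ) / n) * b ^ (((n : ℝ) - m) / n)) ^ (n : ℝ) := by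
        rw [Real.mul_rpow (by positivity) (by positivity),
          ← Real.rpow_mul ha0, ← Real.rpow_mul hb0]
        congr 1 <;> field_simp
    _ ≤ 2 ^ (n : ℝ) := hpow
    _ = 2 ^ n := by rw [Real.rpow_natCast]

theorem stmt_13 (τ d γ : ℕ → ℝ)
    (hτ0 : ∀ n, 0 ≤ τ n) (hτ1 : ∀ n, τ n ≤ 1)
    (hmono : ∀ m n : ℕ, m ≤ n → τ n ≤ τ m)
    (hd : ∀ n, 0 ≤ d n)
    (hγ : ∀ n, 0 < γ n ∧ γ n ≤ 1)
    (hmaster : ∀ N K m : ℕ, 2 ≤ K → 1 ≤ m → m < K →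
      ∏ i ∈ Finset.Icc 1 K, (τ (N + i)) ^ 2 ≤
        ((∏ i ∈ Finset.Icc 1 K, γ (N + i))⁻¹) ^ 2 *
          ((K : ℝ) / m) ^ m * ((K : ℝ) / (K - m : ℝ)) ^ (K - m) *
          (τ (N + 1)) ^ (2 * m) * (d m) ^ (2 * (K - m))) :
    (∀ n m : ℕ, 2 ≤ n → 1 ≤ m → m < n →
      τ n ≤ Real.sqrt 2 * (∏ i ∈ Finset.Icc 1 n, (γ i) ^ ((1 : ℝ) / n))⁻¹ *
        (d m) ^ (((n : ℝ) - m) / n)) ∧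
    (∀ ℓ : ℕ, 1 ≤ ℓ →
      τ (2 * ℓ) ≤ Real.sqrt 2 *
        (∏ i ∈ Finset.Icc 1 (2 * ℓ), (γ i) ^ ((1 : ℝ) / (2 * ℓ)))⁻¹ *
        Real.sqrt (d ℓ)) := by
  have main : ∀ n m : ℕ, 2 ≤ n → 1 ≤ m → m < n →
      τ n ≤ Real.sqrt 2 * (∏ i ∈ Finset.Icc 1 n, (γ i) ^ ((1 : ℝ) / n))⁻¹ *
        (d m) ^ (((n : ℝ) - m) / n) := by
    intro n m hn hm hmn
    have hn0 : (0 : ℝ) < n := by exact_mod_cast (by omega : 0 < n)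
    set P : ℝ := ∏ i ∈ Finset.Icc 1 n, γ i with hP
    have hP0 : 0 < P := Finset.prod_pos (fun i _ => (hγ i).1)
    -- master inequality with N = 0
    have hma := hmaster 0 n m hn hm hmn
    simp only [Nat.zero_add] at hma
    -- lower bound ∏ τ i ^ 2 by τ n ^ (2 * n)
    have hlow : τ n ^ (2 * n) ≤ ∏ i ∈ Finset.Icc 1 n, (τ i) ^ 2 := by
      have : ∏ i ∈ Finset.Icc 1 n, (τ n) ^ 2 ≤ ∏ i ∈ Finset.Icc 1 n, (τ i) ^ 2 := by
        apply Finset.prod_le_prod (fun i _ => by positivity)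
        intro i hi
        exact pow_le_pow_left₀ (hτ0 n) (hmono i n (Finset.mem_Icc.mp hi).2) 2
      calc τ n ^ (2 * n) = ∏ i ∈ Finset.Icc 1 n, (τ n) ^ 2 := by
            rw [Finset.prod_const, Nat.card_Icc, ← pow_mul]
            norm_num
        _ ≤ _ := this
    -- upper bound the RHS of hmaster by P⁻¹ ^ 2 * 2 ^ n * d m ^ (2 * (n - m))
    have hτ1m : τ 1 ^ (2 * m) ≤ 1 := pow_le_one₀ (hτ0 1) (hτ1 1)
    have hAB := stmt13_AB n m hm hmn
    have hkey : τ n ^ (2 * n) ≤ (P⁻¹) ^ 2 * 2 ^ n * d m ^ (2 * (n - m)) := by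
      refine le_trans (le_trans hlow hma) ?_
      have h1 : (P⁻¹) ^ 2 * ((n : ℝ) / m) ^ m * ((n : ℝ) / ((n : ℝ) - m)) ^ (n - m) *
          τ 1 ^ (2 * m) * d m ^ (2 * (n - m)) ≤
          (P⁻¹) ^ 2 * ((n : ℝ) / m) ^ m * ((n : ℝ) / ((n : ℝ) - m)) ^ (n - m) *
          1 * d m ^ (2 * (n - m)) := by
        apply mul_le_mul_of_nonneg_right _ (pow_nonneg (hd m) _)
        apply mul_le_mul_of_nonneg_left hτ1m
        have hm0 : (0 : ℝ) < m := by exact_mod_cast hm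
        have hnm : (0 : ℝ) < (n : ℝ) - m := by
          have : (m : ℝ) < n := by exact_mod_cast hmn
          linarith
        positivity
      refine le_trans h1 ?_
      rw [mul_one]
      apply mul_le_mul_of_nonneg_right _ (pow_nonneg (hd m) _)
      calc (P⁻¹) ^ 2 * ((n : ℝ) / m) ^ m * ((n : ℝ) / ((n : ℝ) - m)) ^ (n - m)
          = (P⁻¹) ^ 2 * (((n : ℝ) / m) ^ m * ((n : ℝ) / ((n : ℝ) - m)) ^ (n - m)) := by ring
        _ ≤ (P⁻¹) ^ 2 * 2 ^ n := by
            apply mul_le_mul_of_nonneg_left hAB (by positivity)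
    -- take (2n)-th roots
    have h2n : 0 < 2 * n := by omega
    have hroot := stmt13_root (τ n) _ (hτ0 n) (2 * n) h2n hkey
    -- compute the root of the RHS
    have hPinv : 0 ≤ P⁻¹ := by positivity
    have hcalc : ((P⁻¹) ^ 2 * 2 ^ n * d m ^ (2 * (n - m))) ^ (((2 * n : ℕ) : ℝ)⁻¹) =
        Real.sqrt 2 * (∏ i ∈ Finset.Icc 1 n, (γ i) ^ ((1 : ℝ) / n))⁻¹ *
        (d m) ^ (((n : ℝ) - m) / n) := by
      have hne : ((2 * n : ℕ) : ℝ) = 2 * (n : ℝ) := by push_cast; ring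
      have hA1 : ((P⁻¹ : ℝ) ^ 2) ^ (((2 * n : ℕ) : ℝ)⁻¹) =
          (∏ i ∈ Finset.Icc 1 n, (γ i) ^ ((1 : ℝ) / n))⁻¹ := by
        have hprod : (∏ i ∈ Finset.Icc 1 n, (γ i) ^ ((1 : ℝ) / n)) = P ^ ((1 : ℝ) / n) :=
          Real.finset_prod_rpow _ _ (fun i _ => (hγ i).1.le) _
        rw [hprod, ← Real.rpow_natCast (P⁻¹) 2, ← Real.rpow_mul hPinv,
          ← Real.inv_rpow hP0.le]
        congr 1
        rw [hne]
        push_cast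
        field_simp
      have hA2 : ((2 : ℝ) ^ n) ^ (((2 * n : ℕ) : ℝ)⁻¹) = Real.sqrt 2 := by
        rw [← Real.rpow_natCast (2 : ℝ) n, ← Real.rpow_mul (by norm_num),
          Real.sqrt_eq_rpow]
        congr 1
        rw [hne]
        field_simp
      have hA3 : (d m ^ (2 * (n - m))) ^ (((2 * n : ℕ) : ℝ)⁻¹) =
          (d m) ^ (((n : ℝ) - m) / n) := by
        rw [← Real.rpow_natCast (d m) (2 * (n - m)), ← Real.rpow_mul (hd m)]
        congr 1
        rw [hne]
        push_cast [Nat.cast_sub hmn.le]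
        field_simp
      rw [Real.mul_rpow (by positivity) (pow_nonneg (hd m) _),
        Real.mul_rpow (by positivity) (by positivity), hA1, hA2, hA3]
      ring
    rw [hcalc] at hroot
    exact hroot
  refine ⟨main, ?_⟩
  intro ℓ hℓ
  have h := main (2 * ℓ) ℓ (by omega) hℓ (by omega)
  have : ((2 * ℓ : ℕ) : ℝ) - ℓ = ℓ := by push_cast; ring
  rw [this] at h
  have hexp : (ℓ : ℝ) / ((2 * ℓ : ℕ) : ℝ) = 1 / 2 := by
    have : (ℓ : ℝ) ≠ 0 := by positivity
    push_cast
    field_simp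
  rw [hexp] at h
  rw [Real.sqrt_eq_rpow (d ℓ)]
  push_cast at h ⊢
  exact h
end

section
/- Let (τ_n)_{n≥1} be a nonincreasing sequence in [0,1], (d_n)_{n≥1} nonnegative with d_n ≤ C₀ e^{−c₁ n^α} for all n (C₀ ≥ 1, c₁, α > 0), and γ ∈ (0,1] a constant. Assume τ_{2ℓ} ≤ √2 γ^{-1} √(d_ℓ) for all ℓ ≥ 1 (Hilbert-space weak greedy with constant parameter). Then for all n ≥ 2, τ_n ≤ C₀ √2 γ^{-1} e^{−c₂ n^α} with c₂ = c₁ 2^{−2α−1}. -/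
theorem stmt_17 (τ d : ℕ → ℝ) (C₀ c₁ α γ : ℝ)
    (hτ0 : ∀ n, 0 ≤ τ n) (hτ1 : ∀ n, τ n ≤ 1)
    (hmono : ∀ m n : ℕ, m ≤ n → τ n ≤ τ m)
    (hd0 : ∀ n, 0 ≤ d n)
    (hC₀ : 1 ≤ C₀) (hc₁ : 0 < c₁) (hα : 0 < α)
    (hγ0 : 0 < γ) (hγ1 : γ ≤ 1)
    (hd : ∀ n : ℕ, 1 ≤ n → d n ≤ C₀ * Real.exp (-c₁ * (n : ℝ) ^ α))
    (hrec : ∀ ℓ : ℕ, 1 ≤ ℓ → τ (2 * ℓ) ≤ Real.sqrt 2 * γ⁻¹ * Real.sqrt (d ℓ)) :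
    ∀ n : ℕ, 2 ≤ n →
      τ n ≤ C₀ * Real.sqrt 2 * γ⁻¹ *
        Real.exp (-(c₁ * (2 : ℝ) ^ (-(2 * α) - 1)) * (n : ℝ) ^ α) := by
  intro n hn
  set ℓ := n / 2 with hℓdef
  have hℓ1 : 1 ≤ ℓ := (Nat.one_le_div_iff (by norm_num)).mpr hn
  have h2ℓ : 2 * ℓ ≤ n := Nat.mul_div_le n 2
  have step1 : τ n ≤ Real.sqrt 2 * γ⁻¹ * Real.sqrt (d ℓ) :=
    (hmono _ _ h2ℓ).trans (hrec ℓ hℓ1)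
  have hC0pos : (0:ℝ) < C₀ := lt_of_lt_of_le one_pos hC₀
  have hdb : d ℓ ≤ C₀ * Real.exp (-c₁ * (ℓ : ℝ) ^ α) := hd ℓ hℓ1
  have hsqrt : Real.sqrt (d ℓ) ≤ Real.sqrt C₀ * Real.exp (-c₁ * (ℓ : ℝ) ^ α / 2) := by
    have h := Real.sqrt_le_sqrt hdb
    rwa [Real.sqrt_mul hC0pos.le, ← Real.exp_half] at h
  have hsqrtC : Real.sqrt C₀ ≤ C₀ := by
    nlinarith [Real.sq_sqrt hC0pos.le, Real.sqrt_nonneg C₀]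
  -- exponent comparison: c₂ * n^α ≤ c₁ * ℓ^α / 2
  have hexp : -(c₁ * (2:ℝ) ^ (-(2 * α) - 1)) * (n : ℝ) ^ α ≥ -c₁ * (ℓ : ℝ) ^ α / 2 →
      True := fun _ => trivial
  have hkey : -c₁ * (ℓ : ℝ) ^ α / 2 ≤ -(c₁ * (2:ℝ) ^ (-(2 * α) - 1)) * (n : ℝ) ^ α := by
    have hn4 : (n : ℝ) / 4 ≤ (ℓ : ℝ) := by
      have h1 : n ≤ 4 * ℓ := by omega
      have : (n : ℝ) ≤ 4 * (ℓ : ℝ) := by exact_mod_cast h1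
      linarith
    have hrp : ((n : ℝ) / 4) ^ α ≤ (ℓ : ℝ) ^ α :=
      Real.rpow_le_rpow (by positivity) hn4 hα.le
    have hdiv : ((n : ℝ) / 4) ^ α = (n : ℝ) ^ α / (4:ℝ) ^ α :=
      Real.div_rpow (Nat.cast_nonneg n) (by norm_num : (0:ℝ) ≤ 4) α
    have h42 : (4:ℝ) = (2:ℝ) ^ (2:ℝ) := by
      rw [show ((2:ℝ)) = ((2:ℕ):ℝ) by norm_num, Real.rpow_natCast]; norm_num
    have h4 : (4:ℝ) ^ α = (2:ℝ) ^ (2 * α) := by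
      rw [h42, ← Real.rpow_mul (by norm_num)]
    have h2 : (2:ℝ) ^ (-(2 * α) - 1) = ((2:ℝ) ^ (2 * α))⁻¹ / 2 := by
      rw [Real.rpow_sub (by norm_num), Real.rpow_neg (by norm_num), Real.rpow_one]
    have hpos : (0:ℝ) < (2:ℝ) ^ (2 * α) := Real.rpow_pos_of_pos (by norm_num) _
    rw [h2]
    rw [hdiv, h4] at hrp
    have : c₁ * ((n : ℝ) ^ α / (2:ℝ) ^ (2 * α)) ≤ c₁ * (ℓ : ℝ) ^ α :=
      mul_le_mul_of_nonneg_left hrp hc₁.le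
    rw [div_eq_mul_inv] at this
    nlinarith
  have hmonoexp : Real.exp (-c₁ * (ℓ : ℝ) ^ α / 2) ≤
      Real.exp (-(c₁ * (2:ℝ) ^ (-(2 * α) - 1)) * (n : ℝ) ^ α) := Real.exp_le_exp.mpr hkey
  have hγ : (0:ℝ) < Real.sqrt 2 * γ⁻¹ := by positivity
  calc τ n ≤ Real.sqrt 2 * γ⁻¹ * Real.sqrt (d ℓ) := step1
    _ ≤ Real.sqrt 2 * γ⁻¹ * (C₀ * Real.exp (-(c₁ * (2:ℝ) ^ (-(2 * α) - 1)) * (n : ℝ) ^ α)) := by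
        apply mul_le_mul_of_nonneg_left _ hγ.le
        calc Real.sqrt (d ℓ) ≤ Real.sqrt C₀ * Real.exp (-c₁ * (ℓ : ℝ) ^ α / 2) := hsqrt
          _ ≤ C₀ * Real.exp (-(c₁ * (2:ℝ) ^ (-(2 * α) - 1)) * (n : ℝ) ^ α) :=
            mul_le_mul hsqrtC hmonoexp (Real.exp_nonneg _) hC0pos.le
    _ = C₀ * Real.sqrt 2 * γ⁻¹ * Real.exp (-(c₁ * (2:ℝ) ^ (-(2 * α) - 1)) * (n : ℝ) ^ α) := by
        ring
end

section
/- Let X be a Hilbert space, X_n ⊆ X an n-dimensional subspace, and σ_0,…,σ_{n−1} ∈ X' linearly independent functionals such that the interpolation operator J_n : X → X_n defined by σ_i(J_n[φ]) = σ_i(φ), i = 0,…,n−1, is well defined. Then the operator norm Λ_n of J_n satisfies Λ_n = 1/β_n, where β_n = inf_{φ ∈ X_n, φ ≠ 0} sup_{σ ∈ span{σ_0,…,σ_{n−1}}, σ ≠ 0} σ(φ) / (‖φ‖ ‖σ‖_{X'}). -/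
open scoped RealInnerProductSpace in
theorem stmt_18 {X : Type*} [NormedAddCommGroup X] [InnerProductSpace ℝ X] [CompleteSpace X]
    (n : ℕ) (Xn : Submodule ℝ X) (hXn : Module.finrank ℝ Xn = n)
    (σ : Fin n → (X →L[ℝ] ℝ)) (hσ : LinearIndependent ℝ σ)
    (J : X →L[ℝ] X) (hJmem : ∀ φ : X, J φ ∈ Xn)
    (hJinterp : ∀ (φ : X) (i : Fin n), σ i (J φ) = σ i φ)
    (β : ℝ)
    (hβ : β = ⨅ φ : {φ : X // φ ∈ Xn ∧ φ ≠ 0},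
        ⨆ s : {s : X →L[ℝ] ℝ // s ∈ Submodule.span ℝ (Set.range σ) ∧ s ≠ 0},
          s.1 φ.1 / (‖φ.1‖ * ‖s.1‖))
    (hβpos : 0 < β) :
    ‖J‖ = 1 / β := by
  classical
  set ιs := {s : X →L[ℝ] ℝ // s ∈ Submodule.span ℝ (Set.range σ) ∧ s ≠ 0} with hιs
  set g : {φ : X // φ ∈ Xn ∧ φ ≠ 0} → ℝ :=
    fun φ => ⨆ s : ιs, s.1 φ.1 / (‖φ.1‖ * ‖s.1‖) with hgdef
  have hβg : β = ⨅ φ, g φ := hβ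
  -- functionals in the span vanish on common kernel of the σ i
  have hspan0 : ∀ s ∈ Submodule.span ℝ (Set.range σ), ∀ x : X, (∀ i, σ i x = 0) → s x = 0 := by
    intro s hs x hx
    induction hs using Submodule.span_induction with
    | mem a ha => obtain ⟨i, rfl⟩ := ha; exact hx i
    | zero => simp
    | add a b _ _ iha ihb => simp [iha, ihb]
    | smul c a _ iha => simp [iha]
  -- inner iSup family is bounded above by 1
  have hbddA : ∀ x : X, BddAbove (Set.range fun s : ιs => s.1 x / (‖x‖ * ‖s.1‖)) := by
    intro x
    refine ⟨1, ?_⟩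
    rintro _ ⟨s, rfl⟩
    rcases eq_or_ne (‖x‖ * ‖s.1‖) 0 with h | h
    · simp [h]
    · have hpos : 0 < ‖x‖ * ‖s.1‖ := lt_of_le_of_ne (by positivity) (Ne.symm h)
      rw [div_le_one hpos]
      calc s.1 x ≤ |s.1 x| := le_abs_self _
        _ = ‖s.1 x‖ := (Real.norm_eq_abs _).symm
        _ ≤ ‖s.1‖ * ‖x‖ := s.1.le_opNorm x
        _ = ‖x‖ * ‖s.1‖ := mul_comm _ _
  have hg_nonneg : ∀ φ, 0 ≤ g φ := by
    intro φ
    rcases isEmpty_or_nonempty ιs with h | h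
    · exact (Real.iSup_of_isEmpty _).ge
    · obtain ⟨s⟩ := h
      have h1 : s.1 φ.1 / (‖φ.1‖ * ‖s.1‖) ≤ g φ := le_ciSup (hbddA φ.1) s
      have hneg : (-s.1 : X →L[ℝ] ℝ) ∈ Submodule.span ℝ (Set.range σ) ∧ -s.1 ≠ 0 :=
        ⟨neg_mem s.2.1, neg_ne_zero.2 s.2.2⟩
      have h2 : -(s.1 φ.1) / (‖φ.1‖ * ‖s.1‖) ≤ g φ := by
        have := le_ciSup (hbddA φ.1) (⟨-s.1, hneg⟩ : ιs)
        simpa using this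
      have := neg_div (‖φ.1‖ * ‖s.1‖) (s.1 φ.1)
      linarith
  have hbddB : BddBelow (Set.range g) := ⟨0, by rintro _ ⟨φ, rfl⟩; exact hg_nonneg φ⟩
  -- common kernel within Xn is trivial
  have hker : ∀ x, x ∈ Xn → (∀ i, σ i x = 0) → x = 0 := by
    intro x hxm hx
    by_contra hne
    have hle : β ≤ g ⟨x, hxm, hne⟩ := hβg ▸ ciInf_le hbddB _
    have : g ⟨x, hxm, hne⟩ ≤ 0 :=
      Real.iSup_le (fun s => by rw [hspan0 s.1 s.2.1 x hx, zero_div]) le_rfl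
    linarith
  have hJs : ∀ s ∈ Submodule.span ℝ (Set.range σ), ∀ x : X, s (J x) = s x := by
    intro s hs x
    have h := hspan0 s hs (J x - x) (fun i => by simp [hJinterp])
    rw [map_sub] at h
    linarith
  -- upper bound
  have hub : ‖J‖ ≤ 1 / β := by
    apply ContinuousLinearMap.opNorm_le_bound _ (by positivity)
    intro x
    rcases eq_or_ne (J x) 0 with h0 | h0
    · rw [h0, norm_zero]; positivity
    · have hJ0 : (0:ℝ) < ‖J x‖ := norm_pos_iff.2 h0
      have hle : β ≤ g ⟨J x, hJmem x, h0⟩ := hβg ▸ ciInf_le hbddB _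
      have hle2 : g ⟨J x, hJmem x, h0⟩ ≤ ‖x‖ / ‖J x‖ := by
        apply Real.iSup_le _ (by positivity)
        intro s
        have hs0 : (0:ℝ) < ‖s.1‖ := norm_pos_iff.2 s.2.2
        have h1 : s.1 (J x) = s.1 x := hJs s.1 s.2.1 x
        have h2 : s.1 x ≤ ‖s.1‖ * ‖x‖ := by
          calc s.1 x ≤ |s.1 x| := le_abs_self _
            _ = ‖s.1 x‖ := (Real.norm_eq_abs _).symm
            _ ≤ ‖s.1‖ * ‖x‖ := s.1.le_opNorm x
        show s.1 (J x) / (‖J x‖ * ‖s.1‖) ≤ ‖x‖ / ‖J x‖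
        rw [h1, div_le_div_iff₀ (by positivity) hJ0]
        nlinarith
      have hβx : β ≤ ‖x‖ / ‖J x‖ := hle.trans hle2
      rw [le_div_iff₀ hJ0] at hβx
      rw [div_mul_eq_mul_div, le_div_iff₀ hβpos]
      nlinarith
  -- setup for lower bound
  rcases isEmpty_or_nonempty {φ : X // φ ∈ Xn ∧ φ ≠ 0} with he | hne
  · exfalso; rw [hβg, Real.iInf_of_isEmpty] at hβpos; exact lt_irrefl 0 hβpos
  have hJfix : ∀ x ∈ Xn, J x = x := by
    intro x hx
    have h : J x - x = 0 :=
      hker _ (Submodule.sub_mem _ (hJmem x) hx) (fun i => by rw [map_sub, hJinterp, sub_self])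
    exact sub_eq_zero.1 h
  have hJ1 : 1 ≤ ‖J‖ := by
    obtain ⟨⟨x, hxm, hx0⟩⟩ := hne
    have hx : (0:ℝ) < ‖x‖ := norm_pos_iff.2 hx0
    have h : ‖x‖ ≤ ‖J‖ * ‖x‖ := by
      calc ‖x‖ = ‖J x‖ := by rw [hJfix x hxm]
        _ ≤ ‖J‖ * ‖x‖ := J.le_opNorm x
    nlinarith
  have hJpos : (0:ℝ) < ‖J‖ := lt_of_lt_of_le one_pos hJ1
  set r : Fin n → X := fun i => (InnerProductSpace.toDual ℝ X).symm (σ i) with hr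
  set Y := Submodule.span ℝ (Set.range r) with hY
  haveI : FiniteDimensional ℝ Y := FiniteDimensional.span_of_finite ℝ (Set.finite_range r)
  have hσr : ∀ (i : Fin n) (x : X), σ i x = ⟪r i, x⟫ := by
    intro i x
    rw [hr]
    exact (InnerProductSpace.toDual_symm_apply).symm
  have horth : ∀ (x : X) (u : X), u ∈ Y → ⟪u, x - (Y.orthogonalProjectionOnto x : X)⟫ = 0 := by
    intro x u hu
    exact (Submodule.mem_orthogonal Y _).1 (Y.sub_starProjection_mem_orthogonal x) u hu
  have hσP : ∀ (i : Fin n) (x : X), σ i ((Y.orthogonalProjectionOnto x : X)) = σ i x := by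
    intro i x
    rw [hσr, hσr]
    have h := horth x (r i) (Submodule.subset_span ⟨i, rfl⟩)
    rw [inner_sub_right] at h
    linarith
  have hlb : ∀ φ : {φ : X // φ ∈ Xn ∧ φ ≠ 0}, 1 / ‖J‖ ≤ g φ := by
    rintro ⟨x, hxm, hx0⟩
    set ψ : X := (Y.orthogonalProjectionOnto x : X) with hψ
    have hψY : ψ ∈ Y := (Y.orthogonalProjectionOnto x).2
    have hx : (0:ℝ) < ‖x‖ := norm_pos_iff.2 hx0
    have hψ0 : ψ ≠ 0 := by
      intro h
      exact hx0 (hker x hxm (fun i => by rw [← hσP i x, ← hψ, h, map_zero]))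
    have hψn : (0:ℝ) < ‖ψ‖ := norm_pos_iff.2 hψ0
    have hJψ : J ψ = x := by
      have h : J ψ - x = 0 := by
        apply hker _ (Submodule.sub_mem _ (hJmem ψ) hxm)
        intro i
        rw [map_sub, hJinterp, hψ, hσP, sub_self]
      exact sub_eq_zero.1 h
    have hsmem : (InnerProductSpace.toDual ℝ X) ψ ∈ Submodule.span ℝ (Set.range σ) := by
      refine Submodule.span_induction ?_ ?_ ?_ ?_ hψY
      · rintro a ⟨i, rfl⟩
        rw [hr]
        simp only [LinearIsometryEquiv.apply_symm_apply]
        exact Submodule.subset_span ⟨i, rfl⟩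
      · simp
      · intro a b _ _ ha hb
        rw [map_add]; exact add_mem ha hb
      · intro c a _ ha
        rw [map_smulₛₗ]
        simpa using Submodule.smul_mem _ c ha
    have hs0 : (InnerProductSpace.toDual ℝ X) ψ ≠ 0 := by
      intro h
      apply hψ0
      have := congrArg (InnerProductSpace.toDual ℝ X).symm h
      simpa using this
    have hval : (InnerProductSpace.toDual ℝ X) ψ x = ‖ψ‖ ^ 2 := by
      rw [InnerProductSpace.toDual_apply_apply]
      have h := horth x ψ hψY
      rw [inner_sub_right] at h
      have h2 : ⟪ψ, x⟫ = ⟪ψ, ψ⟫ := by rw [← hψ] at h; linarith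
      rw [h2, real_inner_self_eq_norm_sq]
    have hns : ‖(InnerProductSpace.toDual ℝ X) ψ‖ = ‖ψ‖ := LinearIsometryEquiv.norm_map _ _
    have hχ : ‖x‖ ≤ ‖J‖ * ‖ψ‖ := by
      calc ‖x‖ = ‖J ψ‖ := by rw [hJψ]
        _ ≤ ‖J‖ * ‖ψ‖ := J.le_opNorm ψ
    have hle : ‖ψ‖ ^ 2 / (‖x‖ * ‖ψ‖) ≤ g ⟨x, hxm, hx0⟩ := by
      have h := le_ciSup (hbddA x) (⟨(InnerProductSpace.toDual ℝ X) ψ, hsmem, hs0⟩ : ιs)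
      simpa [hval, hns] using h
    have heq : ‖ψ‖ ^ 2 / (‖x‖ * ‖ψ‖) = ‖ψ‖ / ‖x‖ := by
      field_simp
    rw [heq] at hle
    have h3 : 1 / ‖J‖ ≤ ‖ψ‖ / ‖x‖ := by
      rw [div_le_div_iff₀ hJpos hx]
      nlinarith
    linarith
  have hβge : 1 / ‖J‖ ≤ β := hβg ▸ le_ciInf hlb
  have h2 : 1 / β ≤ ‖J‖ := by
    rw [div_le_iff₀ hβpos, mul_comm]
    rw [div_le_iff₀ hJpos] at hβge
    exact hβge
  exact le_antisymm hub h2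
end

section
/- Let (τ_n)_{n≥1} be a nonincreasing sequence in [0,1], d_n ≤ C₀ n^{−α} with C₀, α > 0, and γ ∈ (0,1] constant, satisfying the Hilbert-space recursion τ_{N+K} ≤ γ^{-1} √2 · τ_{N+1}^{m/K} d_m^{1−m/K} for all N ≥ 0, K ≥ 2, 1 ≤ m < K, together with τ₁ ≤ 2(1 + η^{-1}) d₁ for some η ∈ (0,1]. Then there is an explicit constant, namely β_n as in Lemma 6.7 of the paper specialized to constant γ (in particular β_n ≤ 2^{3α+1} γ^{-2} for n ≥ 2 when 2(1+η^{-1}) ≤ 2^{3α+1}γ^{-2}), such that τ_n ≤ C₀ 2^{3α+1} γ^{-2} n^{−α} for all n ≥ 2. -/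
private lemma aux_step (τ d : ℕ → ℝ) (C₀ α γ : ℝ)
    (hτ0 : ∀ n, 0 ≤ τ n)
    (hd0 : ∀ n, 0 ≤ d n)
    (hC₀ : 0 < C₀) (hα : 0 < α) (hγ0 : 0 < γ)
    (hd : ∀ n : ℕ, 1 ≤ n → d n ≤ C₀ * (n : ℝ) ^ (-α))
    (hrec : ∀ N K m : ℕ, 2 ≤ K → 1 ≤ m → m < K →
      τ (N + K) ≤ γ⁻¹ * Real.sqrt 2 * (τ (N + 1)) ^ ((m : ℝ) / K) *
        (d m) ^ (1 - (m : ℝ) / K))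
    (N m : ℕ) (hm : 1 ≤ m) (hsq : (N + 2*m)^2 ≤ 8*(N+1)*m)
    (hIH : τ (N+1) ≤ C₀ * (2:ℝ)^(3*α+1) * γ⁻¹^2 * ((N+1 : ℕ) : ℝ)^(-α)) :
    τ (N + 2*m) ≤ C₀ * (2:ℝ)^(3*α+1) * γ⁻¹^2 * ((N + 2*m : ℕ) : ℝ)^(-α) := by
  have hm0 : (0:ℝ) < ((m:ℕ):ℝ) := by exact_mod_cast hm
  have hN1 : (0:ℝ) < ((N+1:ℕ):ℝ) := by exact_mod_cast Nat.succ_pos N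
  have hn0 : (0:ℝ) < ((N+2*m:ℕ):ℝ) := by exact_mod_cast (by omega : 0 < N+2*m)
  have hγi : (0:ℝ) ≤ γ⁻¹ := inv_nonneg.2 hγ0.le
  have h2p : (0:ℝ) < (2:ℝ)^(3*α+1) := Real.rpow_pos_of_pos two_pos _
  have hc0 : (0:ℝ) < (2:ℝ)^(3*α) := Real.rpow_pos_of_pos two_pos _
  -- recursion with K = 2m, exponent 1/2
  have hhalf : ((m:ℕ):ℝ) / ((2*m : ℕ):ℝ) = 1/2 := by
    have h2m : ((2*m : ℕ):ℝ) = 2 * (m:ℝ) := by push_cast; ring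
    rw [h2m]
    rw [div_eq_div_iff (by positivity) (by norm_num)]
    ring
  have h1 := hrec N (2*m) m (by omega) hm (by omega)
  rw [hhalf, show (1:ℝ) - 1/2 = 1/2 by norm_num] at h1
  have hX0 : (0:ℝ) < C₀ * (2:ℝ)^(3*α+1) * γ⁻¹^2 * ((N+1 : ℕ) : ℝ)^(-α) := by
    have := Real.rpow_pos_of_pos hN1 (-α)
    have hγ2 : (0:ℝ) < γ⁻¹^2 := by positivity
    exact mul_pos (mul_pos (mul_pos hC₀ h2p) hγ2) this
  have hY0 : (0:ℝ) < C₀ * ((m : ℕ) : ℝ)^(-α) :=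
    mul_pos hC₀ (Real.rpow_pos_of_pos hm0 _)
  have hA' : τ (N+1) ^ (1/2:ℝ) ≤ (C₀ * (2:ℝ)^(3*α+1) * γ⁻¹^2 * ((N+1 : ℕ) : ℝ)^(-α)) ^ (1/2:ℝ) :=
    Real.rpow_le_rpow (hτ0 _) hIH (by norm_num)
  have hB' : d m ^ (1/2:ℝ) ≤ (C₀ * ((m : ℕ) : ℝ)^(-α)) ^ (1/2:ℝ) :=
    Real.rpow_le_rpow (hd0 _) (hd m hm) (by norm_num)
  have h2 : τ (N + 2*m) ≤ γ⁻¹ * Real.sqrt 2 *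
      (C₀ * (2:ℝ)^(3*α+1) * γ⁻¹^2 * ((N+1 : ℕ) : ℝ)^(-α)) ^ (1/2:ℝ) *
      (C₀ * ((m : ℕ) : ℝ)^(-α)) ^ (1/2:ℝ) := by
    refine h1.trans ?_
    have hg : (0:ℝ) ≤ γ⁻¹ * Real.sqrt 2 := mul_nonneg hγi (Real.sqrt_nonneg 2)
    apply mul_le_mul
    · exact mul_le_mul_of_nonneg_left hA' hg
    · exact hB'
    · exact Real.rpow_nonneg (hd0 _) _
    · exact mul_nonneg hg (Real.rpow_nonneg hX0.le _)
  refine h2.trans ?_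
  have hR0 : (0:ℝ) ≤ C₀ * (2:ℝ)^(3*α+1) * γ⁻¹^2 * ((N + 2*m : ℕ) : ℝ)^(-α) := by
    have := Real.rpow_nonneg hn0.le (-α)
    have hγ2 : (0:ℝ) ≤ γ⁻¹^2 := by positivity
    exact mul_nonneg (mul_nonneg (mul_nonneg hC₀.le h2p.le) hγ2) this
  apply le_of_pow_le_pow_left₀ (two_ne_zero) hR0
  have hsq2 : ∀ x : ℝ, 0 ≤ x → (x ^ (1/2:ℝ))^2 = x := by
    intro x hx
    rw [← Real.rpow_natCast (x ^ (1/2:ℝ)) 2, ← Real.rpow_mul hx]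
    norm_num
  -- positive powers
  have hu0 : (0:ℝ) < ((N+1:ℕ):ℝ)^α := Real.rpow_pos_of_pos hN1 _
  have hv0 : (0:ℝ) < ((m:ℕ):ℝ)^α := Real.rpow_pos_of_pos hm0 _
  have hw0 : (0:ℝ) < ((N+2*m:ℕ):ℝ)^α := Real.rpow_pos_of_pos hn0 _
  have hu : ((N+1:ℕ):ℝ)^(-α) = (((N+1:ℕ):ℝ)^α)⁻¹ := Real.rpow_neg hN1.le α
  have hv : ((m:ℕ):ℝ)^(-α) = (((m:ℕ):ℝ)^α)⁻¹ := Real.rpow_neg hm0.le α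
  have hw : ((N+2*m:ℕ):ℝ)^(-α) = (((N+2*m:ℕ):ℝ)^α)⁻¹ := Real.rpow_neg hn0.le α
  have hAc : (2:ℝ)^(3*α+1) = 2 * (2:ℝ)^(3*α) := by
    rw [Real.rpow_add two_pos, Real.rpow_one]; ring
  -- the key numeric inequality, raised to power α
  have hcast : (((N+2*m:ℕ):ℝ))^(2:ℕ) ≤ 8 * (((N+1:ℕ):ℝ) * ((m:ℕ):ℝ)) := by
    have h := (Nat.cast_le (α := ℝ)).2 hsq
    push_cast at h ⊢
    nlinarith [h]
  have key : (((N+2*m:ℕ):ℝ)^α)^2 ≤ (2:ℝ)^(3*α) * (((N+1:ℕ):ℝ)^α * ((m:ℕ):ℝ)^α) := by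
    have e1 : (((N+2*m:ℕ):ℝ)^α)^2 = ((((N+2*m:ℕ):ℝ))^(2:ℕ))^α := by
      rw [← Real.rpow_natCast (((N+2*m:ℕ):ℝ)) 2, ← Real.rpow_natCast (((N+2*m:ℕ):ℝ)^α) 2,
        ← Real.rpow_mul hn0.le, ← Real.rpow_mul hn0.le, mul_comm α (((2:ℕ):ℝ))]
    have e2 : (8 * (((N+1:ℕ):ℝ) * ((m:ℕ):ℝ)))^α
        = (2:ℝ)^(3*α) * (((N+1:ℕ):ℝ)^α * ((m:ℕ):ℝ)^α) := by
      rw [Real.mul_rpow (by norm_num) (by positivity), Real.mul_rpow hN1.le hm0.le]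
      congr 1
      rw [show (8:ℝ) = (2:ℝ)^(3:ℕ) by norm_num, ← Real.rpow_natCast (2:ℝ) 3,
        ← Real.rpow_mul (by norm_num : (0:ℝ) ≤ 2)]
      norm_num
    rw [e1, ← e2]
    exact Real.rpow_le_rpow (by positivity) hcast hα.le
  have hmain : (((N+1:ℕ):ℝ)^α)⁻¹ * (((m:ℕ):ℝ)^α)⁻¹
      ≤ (2:ℝ)^(3*α) * ((((N+2*m:ℕ):ℝ)^α)⁻¹)^2 := by
    rw [← mul_inv, inv_pow, ← div_eq_mul_inv, inv_eq_one_div,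
      div_le_div_iff₀ (by positivity) (by positivity), one_mul]
    exact key
  calc (γ⁻¹ * Real.sqrt 2 *
      (C₀ * (2:ℝ)^(3*α+1) * γ⁻¹^2 * ((N+1 : ℕ) : ℝ)^(-α)) ^ (1/2:ℝ) *
      (C₀ * ((m : ℕ) : ℝ)^(-α)) ^ (1/2:ℝ))^2
      = γ⁻¹^2 * (Real.sqrt 2)^2 *
        ((C₀ * (2:ℝ)^(3*α+1) * γ⁻¹^2 * ((N+1 : ℕ) : ℝ)^(-α)) ^ (1/2:ℝ))^2 *
        ((C₀ * ((m : ℕ) : ℝ)^(-α)) ^ (1/2:ℝ))^2 := by ring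
    _ = γ⁻¹^2 * 2 * (C₀ * (2:ℝ)^(3*α+1) * γ⁻¹^2 * ((N+1 : ℕ) : ℝ)^(-α)) *
        (C₀ * ((m : ℕ) : ℝ)^(-α)) := by
        rw [Real.sq_sqrt (by norm_num : (0:ℝ) ≤ 2), hsq2 _ hX0.le, hsq2 _ hY0.le]
    _ = (4 * C₀^2 * (2:ℝ)^(3*α) * γ⁻¹^4) *
        ((((N+1:ℕ):ℝ)^α)⁻¹ * (((m:ℕ):ℝ)^α)⁻¹) := by
        rw [hAc, hu, hv]; ring
    _ ≤ (4 * C₀^2 * (2:ℝ)^(3*α) * γ⁻¹^4) *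
        ((2:ℝ)^(3*α) * ((((N+2*m:ℕ):ℝ)^α)⁻¹)^2) := by
        refine mul_le_mul_of_nonneg_left hmain ?_
        positivity
    _ = (C₀ * (2:ℝ)^(3*α+1) * γ⁻¹^2 * ((N + 2*m : ℕ) : ℝ)^(-α))^2 := by
        rw [hAc, hw]; ring

theorem stmt_19 (τ d : ℕ → ℝ) (C₀ α γ η : ℝ)
    (hτ0 : ∀ n, 0 ≤ τ n) (hτ1 : ∀ n, τ n ≤ 1)
    (hmono : ∀ m n : ℕ, m ≤ n → τ n ≤ τ m)
    (hd0 : ∀ n, 0 ≤ d n)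
    (hC₀ : 0 < C₀) (hα : 0 < α)
    (hγ0 : 0 < γ) (hγ1 : γ ≤ 1)
    (hη0 : 0 < η) (hη1 : η ≤ 1)
    (hd : ∀ n : ℕ, 1 ≤ n → d n ≤ C₀ * (n : ℝ) ^ (-α))
    (hrec : ∀ N K m : ℕ, 2 ≤ K → 1 ≤ m → m < K →
      τ (N + K) ≤ γ⁻¹ * Real.sqrt 2 * (τ (N + 1)) ^ ((m : ℝ) / K) *
        (d m) ^ (1 - (m : ℝ) / K))
    (hτ1' : τ 1 ≤ 2 * (1 + η⁻¹) * d 1)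
    (hcomp : 2 * (1 + η⁻¹) ≤ (2 : ℝ) ^ (3 * α + 1) * γ⁻¹ ^ 2) :
    ∀ n : ℕ, 2 ≤ n →
      τ n ≤ C₀ * (2 : ℝ) ^ (3 * α + 1) * γ⁻¹ ^ 2 * (n : ℝ) ^ (-α) := by
  have h2p : (0:ℝ) < (2:ℝ)^(3*α+1) := Real.rpow_pos_of_pos two_pos _
  have hbase : τ 1 ≤ C₀ * (2:ℝ)^(3*α+1) * γ⁻¹^2 * ((1 : ℕ) : ℝ)^(-α) := by
    have h1 : τ 1 ≤ (2:ℝ)^(3*α+1) * γ⁻¹^2 * d 1 :=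
      hτ1'.trans (mul_le_mul_of_nonneg_right hcomp (hd0 1))
    have h2 : d 1 ≤ C₀ := by
      have := hd 1 le_rfl
      simpa [Real.one_rpow] using this
    have h3 : ((1:ℕ):ℝ)^(-α) = 1 := by
      simp [Real.one_rpow]
    rw [h3, mul_one]
    have hγ2 : (0:ℝ) ≤ γ⁻¹^2 := by positivity
    nlinarith [mul_le_mul_of_nonneg_left h2 (mul_nonneg h2p.le hγ2)]
  intro n
  induction n using Nat.strong_induction_on with
  | _ n ih =>
    intro hn
    rcases eq_or_lt_of_le hn with h2 | h3
    · -- n = 2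
      have h := aux_step τ d C₀ α γ hτ0 hd0 hC₀ hα hγ0 hd hrec 0 1 le_rfl (by norm_num)
        (by simpa using hbase)
      rw [← h2]
      simpa using h
    · -- n ≥ 3
      obtain ⟨m, N, hnN, hm1, hN1', hub, hlb⟩ :
          ∃ m N, n = N + 2*m ∧ 1 ≤ m ∧ 1 ≤ N ∧ n ≤ 4*m ∧ 4*m ≤ n+3 :=
        ⟨(n+3)/4, n - 2*((n+3)/4), by omega, by omega, by omega, by omega, by omega⟩
      subst hnN
      have hsq : (N + 2*m)^2 ≤ 8*(N+1)*m := by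
        have h3' : N ≤ 2*m := by omega
        have h4' : 2*m ≤ N + 3 := by omega
        zify at h3' h4' hm1 hN1' ⊢
        nlinarith [mul_nonneg (by linarith : (0:ℤ) ≤ 2*(m:ℤ) - N)
          (by linarith : (0:ℤ) ≤ 3 - (2*(m:ℤ) - N))]
      have hIH : τ (N+1) ≤ C₀ * (2:ℝ)^(3*α+1) * γ⁻¹^2 * ((N+1 : ℕ) : ℝ)^(-α) := by
        rcases eq_or_lt_of_le hN1' with hN1e | hN2
        · rw [← hN1e] at *
          simpa using (by simpa using ih 2 (by omega) (by omega) : τ 2 ≤ _)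
        · exact ih (N+1) (by omega) (by omega)
      exact aux_step τ d C₀ α γ hτ0 hd0 hC₀ hα hγ0 hd hrec N m hm1 hsq hIH
end
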